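/- arXiv:1304.4169 — 8 statements merged into one kernel-verified Lean document; each statement's English description precedes it below -/
import Mathlib

section
/- Let Γ be a backward inhomogeneous Y-semigroup with generator A. Assume Y₁ ⊆ D(A), that Γ is Y₁-super strongly s-continuous (i.e. Γ(s,t)Y₁ ⊆ Y₁ for all (s,t) ∈ Δ_J and for every f ∈ Y₁ and t ∈ J the map u ↦ Γ(u,t)f is continuous from {u ∈ J : u ≤ t} to Y₁ in the Y₁-norm), and that Γ is Y₁-strongly t-continuous (i.e. for every f ∈ Y₁ and s ∈ J the map u ↦ Γ(s,u)f is continuous from {u ∈ J : u ≥ s} to Y in the Y-norm). Then for all (s,t) ∈ Δ_J and all f ∈ Y₁, the map u ↦ Γ(u,t)f is differentiable in s with ∂/∂s Γ(s,t)f = −A(s)Γ(s,t)f (derivative and limit in the Y-norm). -/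
open Filter Topology Set MeasureTheory

/-- Let `Γ` be a backward inhomogeneous `Y`-semigroup with generator `A`.
Assume `Y₁ ⊆ D(A)` (encoded by `hGen`, where `ι : Y₁ →L[ℝ] Y` is the continuous embedding),
that `Γ` is `Y₁`-super strongly `s`-continuous (it preserves `Y₁`, encoded by `Γ₁` and `hΓ₁`,
and `u ↦ Γ(u,t)f` is `Y₁`-norm continuous), and that `Γ` is `Y₁`-strongly `t`-continuous.
Then `∂/∂s Γ(s,t)f = −A(s)Γ(s,t)f` for all `(s,t) ∈ Δ_J` and `f ∈ Y₁`. -/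
theorem stmt_0
    {Y : Type*} [NormedAddCommGroup Y] [NormedSpace ℝ Y] [CompleteSpace Y]
    [TopologicalSpace.SeparableSpace Y]
    {Y₁ : Type*} [NormedAddCommGroup Y₁] [NormedSpace ℝ Y₁] [CompleteSpace Y₁]
    [TopologicalSpace.SeparableSpace Y₁]
    (ι : Y₁ →L[ℝ] Y) (hι : Function.Injective ι)
    (J : Set ℝ) (hJ : J = Set.Ici (0 : ℝ) ∨ ∃ T : ℝ, 0 < T ∧ J = Set.Icc 0 T)
    (Γ : ℝ → ℝ → Y →L[ℝ] Y)
    (hId : ∀ t ∈ J, Γ t t = ContinuousLinearMap.id ℝ Y)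
    (hSemi : ∀ s r t : ℝ, s ∈ J → r ∈ J → t ∈ J → s ≤ r → r ≤ t →
      ∀ f : Y, Γ s r (Γ r t f) = Γ s t f)
    (A : ℝ → Y₁ → Y)
    (hGen : ∀ t ∈ J, ∀ f : Y₁,
      Tendsto (fun h : ℝ => h⁻¹ • (Γ t (t + h) (ι f) - ι f))
        (𝓝[{h : ℝ | 0 < h ∧ t + h ∈ J}] 0) (𝓝 (A t f)) ∧
      Tendsto (fun h : ℝ => h⁻¹ • (Γ (t - h) t (ι f) - ι f))
        (𝓝[{h : ℝ | 0 < h ∧ t - h ∈ J}] 0) (𝓝 (A t f)))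
    (Γ₁ : ℝ → ℝ → Y₁ → Y₁)
    (hΓ₁ : ∀ s t : ℝ, s ∈ J → t ∈ J → s ≤ t → ∀ f : Y₁, ι (Γ₁ s t f) = Γ s t (ι f))
    (hsCont : ∀ t ∈ J, ∀ f : Y₁, ContinuousOn (fun u => Γ₁ u t f) {u ∈ J | u ≤ t})
    (htCont : ∀ s ∈ J, ∀ f : Y₁, ContinuousOn (fun u => Γ s u (ι f)) {u ∈ J | s ≤ u}) :
    ∀ s t : ℝ, s ∈ J → t ∈ J → s ≤ t → ∀ f : Y₁,
      HasDerivWithinAt (fun u => Γ u t (ι f)) (-(A s (Γ₁ s t f))) {u ∈ J | u ≤ t} s := by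
  intro s t hs ht hst f
  have hmem : ∀ u : ℝ, s ≤ u → u ≤ t → u ∈ J := by
    rcases hJ with hJ | ⟨T, hT, hJ⟩
    · intro u h1 h2; rw [hJ] at hs ⊢; exact le_trans hs h1
    · intro u h1 h2; rw [hJ] at hs ht ⊢
      exact ⟨le_trans hs.1 h1, le_trans h2 ht.2⟩
  set g : Y₁ := Γ₁ s t f with hg
  have hιg : ι g = Γ s t (ι f) := hΓ₁ s t hs ht hst f
  set S : Set ℝ := {u ∈ J | u ≤ t} with hS
  rw [hasDerivWithinAt_iff_tendsto_slope]
  have hsplit : S \ {s} = (S ∩ Iio s) ∪ (S ∩ Ioi s) := by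
    ext u
    simp only [hS, mem_diff, mem_singleton_iff, mem_union, mem_inter_iff, mem_Iio, mem_Ioi,
      mem_setOf_eq]
    constructor
    · rintro ⟨hu, hne⟩
      rcases lt_or_gt_of_ne hne with h | h
      · exact Or.inl ⟨hu, h⟩
      · exact Or.inr ⟨hu, h⟩
    · rintro (⟨hu, h⟩ | ⟨hu, h⟩)
      exacts [⟨hu, ne_of_lt h⟩, ⟨hu, ne_of_gt h⟩]
  rw [hsplit, nhdsWithin_union, tendsto_sup]
  constructor
  · -- left derivative
    have hgen := (hGen s hs g).2
    have hmap : Tendsto (fun u => s - u) (𝓝[S ∩ Iio s] s)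
        (𝓝[{h : ℝ | 0 < h ∧ s - h ∈ J}] 0) := by
      apply tendsto_nhdsWithin_of_tendsto_nhds_of_eventually_within
      · have h0 : Tendsto (fun u : ℝ => s - u) (𝓝 s) (𝓝 (s - s)) :=
          tendsto_const_nhds.sub tendsto_id
        simpa using h0.mono_left nhdsWithin_le_nhds
      · filter_upwards [self_mem_nhdsWithin] with u hu
        refine ⟨by simpa [sub_pos] using hu.2, ?_⟩
        simpa using hu.1.1
    have h1 := (hgen.comp hmap).neg
    apply h1.congr'
    filter_upwards [self_mem_nhdsWithin] with u hu
    have huJ : u ∈ J := hu.1.1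
    have hult : u < s := hu.2
    have hFu : Γ u t (ι f) = Γ u s (ι g) := by
      rw [hιg, hSemi u s t huJ hs ht hult.le hst]
    simp only [Function.comp_def, slope_def_module, sub_sub_cancel]
    rw [hFu, ← hιg, hιg, ← neg_sub s u, inv_neg, neg_smul]
  · -- right derivative
    rcases eq_or_lt_of_le hst with rfl | hlt
    · have hempty : S ∩ Ioi s = ∅ := by
        ext u
        simp only [hS, mem_inter_iff, mem_setOf_eq, mem_Ioi, mem_empty_iff_false, iff_false,
          not_and]
        rintro ⟨_, h1⟩ h2; exact absurd h1 (not_le.mpr h2)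
      rw [hempty, nhdsWithin_empty]
      exact tendsto_bot
    · set δ := t - s with hδ
      have hδpos : 0 < δ := sub_pos.mpr hlt
      set T : ℝ → Y₁ →L[ℝ] Y := fun h => h⁻¹ • ((Γ s (s + h)).comp ι - ι) with hT
      have hTapp : ∀ h (w : Y₁), T h w = h⁻¹ • (Γ s (s + h) (ι w) - ι w) := by
        intro h w; simp [hT]
      -- pointwise boundedness of the family
      have hpt : ∀ w : Y₁, ∃ C, ∀ h ∈ Ioc (0:ℝ) δ, ‖T h w‖ ≤ C := by
        intro w
        have hgen := (hGen s hs w).1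
        have hle : 𝓝[Ioc (0:ℝ) δ] (0:ℝ) ≤ 𝓝[{h : ℝ | 0 < h ∧ s + h ∈ J}] 0 := by
          apply nhdsWithin_mono
          intro h hh
          exact ⟨hh.1, hmem _ (by linarith [hh.1.le]) (by linarith [hh.2])⟩
        have hev : ∀ᶠ h in 𝓝[Ioc (0:ℝ) δ] 0, ‖T h w‖ < ‖A s w‖ + 1 := by
          have h2 := ((hgen.mono_left hle).norm).eventually_lt_const (lt_add_one _)
          filter_upwards [h2] with h hh
          rwa [hTapp]
        rw [eventually_iff, Metric.mem_nhdsWithin_iff] at hev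
        obtain ⟨ε, hε, hball⟩ := hev
        have hcont : ContinuousOn (fun h : ℝ => T h w) (Icc ε δ) := by
          have hc1 : ContinuousOn (fun h : ℝ => h⁻¹) (Icc ε δ) :=
            continuousOn_inv₀.mono fun x hx => ne_of_gt (lt_of_lt_of_le hε hx.1)
          have hc2 : ContinuousOn (fun h : ℝ => Γ s (s + h) (ι w) - ι w) (Icc ε δ) := by
            apply ContinuousOn.sub _ continuousOn_const
            have hmt : MapsTo (fun h : ℝ => s + h) (Icc ε δ) {u | u ∈ J ∧ s ≤ u} := by
              intro h hh
              rw [mem_Icc] at hh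
              obtain ⟨h1, h2⟩ := hh
              show s + h ∈ {u | u ∈ J ∧ s ≤ u}
              exact ⟨hmem _ (by linarith) (by linarith), by linarith⟩
            exact (htCont s hs w).comp
              (Continuous.continuousOn (by fun_prop : Continuous fun h : ℝ => s + h)) hmt
          have := hc1.smul hc2
          apply this.congr
          intro h hh; simp only [hTapp]; rfl
        obtain ⟨C₂, hC₂⟩ := isCompact_Icc.exists_bound_of_continuousOn hcont
        refine ⟨max (‖A s w‖ + 1) C₂, fun h hh => ?_⟩
        by_cases hcase : h < ε
        · refine le_trans (le_of_lt ?_) (le_max_left _ _)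
          exact hball ⟨by simpa [abs_of_pos hh.1] using hcase, hh⟩
        · exact le_trans (hC₂ h ⟨not_lt.mp hcase, hh.2⟩) (le_max_right _ _)
      obtain ⟨C', hC'⟩ := banach_steinhaus
        (g := fun i : {h : ℝ // h ∈ Ioc (0:ℝ) δ} => T i.1)
        (fun w => (hpt w).imp fun C hC i => hC i.1 i.2)
      have hbound : ∀ h ∈ Ioc (0:ℝ) δ, ∀ w : Y₁, ‖T h w‖ ≤ C' * ‖w‖ := fun h hh w =>
        ((T h).le_opNorm w).trans (mul_le_mul_of_nonneg_right (hC' ⟨h, hh⟩) (norm_nonneg w))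
      -- facts about the right filter
      have hfacts : ∀ᶠ u in 𝓝[S ∩ Ioi s] s, u ∈ J ∧ s < u ∧ u ≤ t := by
        filter_upwards [self_mem_nhdsWithin] with u hu
        exact ⟨hu.1.1, hu.2, hu.1.2⟩
      -- claim A : T (u-s) g → A s g
      have hmapR : Tendsto (fun u => u - s) (𝓝[S ∩ Ioi s] s)
          (𝓝[{h : ℝ | 0 < h ∧ s + h ∈ J}] 0) := by
        apply tendsto_nhdsWithin_of_tendsto_nhds_of_eventually_within
        · have h0 : Tendsto (fun u : ℝ => u - s) (𝓝 s) (𝓝 (s - s)) :=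
            tendsto_id.sub tendsto_const_nhds
          simpa using h0.mono_left nhdsWithin_le_nhds
        · filter_upwards [hfacts] with u hu
          exact ⟨sub_pos.mpr hu.2.1, by simpa using hu.1⟩
      have claimA : Tendsto (fun u => T (u - s) g) (𝓝[S ∩ Ioi s] s) (𝓝 (A s g)) := by
        have := (hGen s hs g).1.comp hmapR
        apply this.congr
        intro u
        simp only [Function.comp_def, hTapp, add_sub_cancel]
      -- claim B : T (u-s) (Γ₁ u t f - g) → 0
      have hgtend : Tendsto (fun u => Γ₁ u t f - g) (𝓝[S ∩ Ioi s] s) (𝓝 0) := by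
        have hcw : Tendsto (fun u => Γ₁ u t f) (𝓝[S] s) (𝓝 g) :=
          (hsCont t ht f) s ⟨hs, hst⟩
        have := (hcw.mono_left (nhdsWithin_mono _ (inter_subset_left : S ∩ Ioi s ⊆ S))).sub
          (tendsto_const_nhds (x := g))
        simpa using this
      have claimB : Tendsto (fun u => T (u - s) (Γ₁ u t f - g)) (𝓝[S ∩ Ioi s] s) (𝓝 0) := by
        apply squeeze_zero_norm' (a := fun u => C' * ‖Γ₁ u t f - g‖)
        · filter_upwards [hfacts] with u hu
          exact hbound (u - s) ⟨sub_pos.mpr hu.2.1, by simp [hδ]; linarith [hu.2.2]⟩ _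
        · have := (hgtend.norm).const_mul C'
          simpa using this
      have claimC : Tendsto (fun u => T (u - s) (Γ₁ u t f)) (𝓝[S ∩ Ioi s] s) (𝓝 (A s g)) := by
        have := claimA.add claimB
        rw [add_zero] at this
        apply this.congr
        intro u
        rw [map_sub]
        abel
      have := claimC.neg
      apply this.congr'
      filter_upwards [hfacts] with u hu
      have hFu : Γ u t (ι f) = ι (Γ₁ u t f) := (hΓ₁ u t hu.1 ht hu.2.2 f).symm
      have hFs : Γ s t (ι f) = Γ s u (ι (Γ₁ u t f)) := by
        rw [hΓ₁ u t hu.1 ht hu.2.2 f, hSemi s u t hs hu.1 ht hu.2.1.le hu.2.2]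
      simp only [slope_def_module, hTapp, add_sub_cancel]
      rw [hFu, hFs, smul_sub, smul_sub, neg_sub]
end

section
/- Let Γ be a backward inhomogeneous Y-semigroup with generator A. Assume Y₁ ⊆ D(A) and that Γ is Y-strongly t-continuous (i.e. for every f ∈ Y and s ∈ J the map u ↦ Γ(s,u)f is continuous from {u ∈ J : u ≥ s} to Y in the Y-norm). Then for all (s,t) ∈ Δ_J and all f ∈ Y₁, the map u ↦ Γ(s,u)f is differentiable in t with ∂/∂t Γ(s,t)f = Γ(s,t)A(t)f (derivative and limit in the Y-norm). -/
open Filter Topology Set MeasureTheory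

/-- Let `Γ` be a backward inhomogeneous `Y`-semigroup with generator `A`.
Assume `Y₁ ⊆ D(A)` (encoded by `hGen`) and that `Γ` is `Y`-strongly `t`-continuous. Then
`∂/∂t Γ(s,t)f = Γ(s,t)A(t)f` for all `(s,t) ∈ Δ_J` and `f ∈ Y₁`. -/
theorem stmt_1
    {Y : Type*} [NormedAddCommGroup Y] [NormedSpace ℝ Y] [CompleteSpace Y]
    [TopologicalSpace.SeparableSpace Y]
    {Y₁ : Type*} [NormedAddCommGroup Y₁] [NormedSpace ℝ Y₁] [CompleteSpace Y₁]
    [TopologicalSpace.SeparableSpace Y₁]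
    (ι : Y₁ →L[ℝ] Y) (hι : Function.Injective ι)
    (J : Set ℝ) (hJ : J = Set.Ici (0 : ℝ) ∨ ∃ T : ℝ, 0 < T ∧ J = Set.Icc 0 T)
    (Γ : ℝ → ℝ → Y →L[ℝ] Y)
    (hId : ∀ t ∈ J, Γ t t = ContinuousLinearMap.id ℝ Y)
    (hSemi : ∀ s r t : ℝ, s ∈ J → r ∈ J → t ∈ J → s ≤ r → r ≤ t →
      ∀ f : Y, Γ s r (Γ r t f) = Γ s t f)
    (A : ℝ → Y₁ → Y)
    (hGen : ∀ t ∈ J, ∀ f : Y₁,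
      Tendsto (fun h : ℝ => h⁻¹ • (Γ t (t + h) (ι f) - ι f))
        (𝓝[{h : ℝ | 0 < h ∧ t + h ∈ J}] 0) (𝓝 (A t f)) ∧
      Tendsto (fun h : ℝ => h⁻¹ • (Γ (t - h) t (ι f) - ι f))
        (𝓝[{h : ℝ | 0 < h ∧ t - h ∈ J}] 0) (𝓝 (A t f)))
    (htCont : ∀ s ∈ J, ∀ f : Y, ContinuousOn (fun u => Γ s u f) {u ∈ J | s ≤ u}) :
    ∀ s t : ℝ, s ∈ J → t ∈ J → s ≤ t → ∀ f : Y₁,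
      HasDerivWithinAt (fun u => Γ s u (ι f)) (Γ s t (A t f)) {u ∈ J | s ≤ u} t := by
  intro s t hs ht hst f
  set S : Set ℝ := {u ∈ J | s ≤ u} with hSdef
  have hIccJ : Set.Icc s t ⊆ J := by
    rcases hJ with h | ⟨T, hT, h⟩
    · subst h; intro u hu; exact le_trans hs hu.1
    · subst h; intro u hu; exact ⟨le_trans hs.1 hu.1, le_trans hu.2 ht.2⟩
  -- operator norm bound on Icc s t
  obtain ⟨C, hC⟩ : ∃ C, ∀ u : Set.Icc s t, ‖Γ s u‖ ≤ C := by
    apply banach_steinhaus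
    intro g
    obtain ⟨C, hC⟩ := isCompact_Icc.exists_bound_of_continuousOn
      ((htCont s hs g).mono (fun u hu => ⟨hIccJ hu, hu.1⟩))
    exact ⟨C, fun u => hC u u.2⟩
  -- right limit
  have hright : Tendsto (slope (fun u => Γ s u (ι f)) t) (𝓝[S ∩ Set.Ioi t] t)
      (𝓝 (Γ s t (A t f))) := by
    have h1 : Tendsto (fun u => u - t) (𝓝[S ∩ Set.Ioi t] t)
        (𝓝[{h : ℝ | 0 < h ∧ t + h ∈ J}] 0) := by
      apply tendsto_nhdsWithin_of_tendsto_nhds_of_eventually_within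
      · have : Tendsto (fun u : ℝ => u - t) (𝓝 t) (𝓝 (t - t)) :=
          (continuous_id.sub continuous_const).tendsto t
        simpa using this.mono_left nhdsWithin_le_nhds
      · filter_upwards [self_mem_nhdsWithin] with u hu
        exact ⟨sub_pos.mpr hu.2, by simpa using hu.1.1⟩
    have h2 := (hGen t ht f).1.comp h1
    have h3 := ((Γ s t).continuous.tendsto (A t f)).comp h2
    apply h3.congr'
    filter_upwards [self_mem_nhdsWithin] with u hu
    have hsemi : Γ s t (Γ t u (ι f)) = Γ s u (ι f) :=
      hSemi s t u hs ht hu.1.1 hst (le_of_lt hu.2) (ι f)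
    simp only [Function.comp_apply, add_sub_cancel, slope, vsub_eq_sub]
    rw [(Γ s t).map_smul, (Γ s t).map_sub, hsemi]
  -- left limit
  have hleft : Tendsto (slope (fun u => Γ s u (ι f)) t) (𝓝[S ∩ Set.Iio t] t)
      (𝓝 (Γ s t (A t f))) := by
    set v : ℝ → Y := fun u => (t - u)⁻¹ • (Γ u t (ι f) - ι f) with hvdef
    have h1 : Tendsto (fun u => t - u) (𝓝[S ∩ Set.Iio t] t)
        (𝓝[{h : ℝ | 0 < h ∧ t - h ∈ J}] 0) := by
      apply tendsto_nhdsWithin_of_tendsto_nhds_of_eventually_within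
      · have : Tendsto (fun u : ℝ => t - u) (𝓝 t) (𝓝 (t - t)) :=
          (continuous_const.sub continuous_id).tendsto t
        simpa using this.mono_left nhdsWithin_le_nhds
      · filter_upwards [self_mem_nhdsWithin] with u hu
        exact ⟨sub_pos.mpr hu.2, by simpa using hu.1.1⟩
    have hv : Tendsto v (𝓝[S ∩ Set.Iio t] t) (𝓝 (A t f)) := by
      have h2 := (hGen t ht f).2.comp h1
      apply h2.congr
      intro u
      simp [Function.comp, v]
    have h0 : Tendsto (fun u => Γ s u (v u - A t f)) (𝓝[S ∩ Set.Iio t] t) (𝓝 0) := by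
      rw [tendsto_zero_iff_norm_tendsto_zero]
      have hb : Tendsto (fun u => C * ‖v u - A t f‖) (𝓝[S ∩ Set.Iio t] t) (𝓝 (C * 0)) := by
        apply Tendsto.const_mul
        have := hv.sub_const (A t f)
        rw [← tendsto_zero_iff_norm_tendsto_zero]
        simpa using this
      refine squeeze_zero' (Eventually.of_forall fun u => norm_nonneg _) ?_ (by simpa using hb)
      filter_upwards [self_mem_nhdsWithin] with u hu
      calc ‖Γ s u (v u - A t f)‖ ≤ ‖Γ s u‖ * ‖v u - A t f‖ := (Γ s u).le_opNorm _
      _ ≤ C * ‖v u - A t f‖ :=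
          mul_le_mul_of_nonneg_right (hC ⟨u, hu.1.2, le_of_lt hu.2⟩) (norm_nonneg _)
    have h2 : Tendsto (fun u => Γ s u (A t f)) (𝓝[S ∩ Set.Iio t] t)
        (𝓝 (Γ s t (A t f))) := by
      have hcw := (htCont s hs (A t f)) t ⟨ht, hst⟩
      exact hcw.mono_left (nhdsWithin_mono _ inter_subset_left)
    have h3 : Tendsto (fun u => Γ s u (v u)) (𝓝[S ∩ Set.Iio t] t)
        (𝓝 (Γ s t (A t f))) := by
      have := h0.add h2
      rw [zero_add] at this
      apply this.congr
      intro u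
      simp [map_sub]
    apply h3.congr'
    filter_upwards [self_mem_nhdsWithin] with u hu
    have hut : u ≤ t := le_of_lt hu.2
    have hsemi : Γ s u (Γ u t (ι f)) = Γ s t (ι f) :=
      hSemi s u t hs hu.1.1 ht hu.1.2 hut (ι f)
    have hv' : v u = (u - t)⁻¹ • (ι f - Γ u t (ι f)) := by
      simp only [hvdef]
      rw [show (t - u) = -(u - t) by ring, inv_neg, neg_smul, ← smul_neg, neg_sub]
    simp only [slope, vsub_eq_sub]
    rw [hv', (Γ s u).map_smul, (Γ s u).map_sub, hsemi]
  -- combine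
  rw [hasDerivWithinAt_iff_tendsto_slope]
  have hsub : S \ {t} ⊆ (S ∩ Set.Iio t) ∪ (S ∩ Set.Ioi t) := by
    rintro u ⟨huS, hut⟩
    rcases lt_or_gt_of_ne (fun h => hut h) with h | h
    · exact Or.inl ⟨huS, h⟩
    · exact Or.inr ⟨huS, h⟩
  refine Tendsto.mono_left ?_ (nhdsWithin_mono t hsub)
  rw [nhdsWithin_union]
  exact tendsto_sup.mpr ⟨hleft, hright⟩
end

section
/- Let Γ be a backward inhomogeneous Y-semigroup with generator A such that Y₁ ⊆ D(A), Γ is Y-strongly t-continuous, and hence ∂/∂t Γ(s,t)f = Γ(s,t)A(t)f for all (s,t) ∈ Δ_J and f ∈ Y₁. Assume in addition that for every t ∈ J the restriction of A(t) to Y₁ is a bounded linear operator from Y₁ to Y, and that for every (s,t) ∈ Δ_J the function u ↦ ‖A(u)‖_{B(Y₁,Y)} is Lebesgue integrable on [s,t]. Then for every f ∈ Y₁ and every (s,t) ∈ Δ_J, the map u ↦ Γ(s,u)A(u)f is Bochner integrable on [s,t] and Γ(s,t)f − f = ∫_s^t Γ(s,u)A(u)f du (Bochner integral in Y). -/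
open Filter Topology Set MeasureTheory

/-- Let `Γ` be a backward inhomogeneous `Y`-semigroup with generator `A` such
that `Y₁ ⊆ D(A)` (`hGen`), `Γ` is `Y`-strongly `t`-continuous, and hence
`∂/∂t Γ(s,t)f = Γ(s,t)A(t)f` (`hDeriv`).  Assume in addition that each `A(t)` restricted to
`Y₁` is a bounded operator `Y₁ → Y` (so `A : ℝ → Y₁ →L[ℝ] Y`) and that `u ↦ ‖A(u)‖_{B(Y₁,Y)}`
is integrable on `[s,t]`.  Then for every `f ∈ Y₁` and `(s,t) ∈ Δ_J`, `u ↦ Γ(s,u)A(u)f` is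
Bochner integrable on `[s,t]` and `Γ(s,t)f − f = ∫_s^t Γ(s,u)A(u)f du`. -/
theorem stmt_2
    {Y : Type*} [NormedAddCommGroup Y] [NormedSpace ℝ Y] [CompleteSpace Y]
    [TopologicalSpace.SeparableSpace Y]
    {Y₁ : Type*} [NormedAddCommGroup Y₁] [NormedSpace ℝ Y₁] [CompleteSpace Y₁]
    [TopologicalSpace.SeparableSpace Y₁]
    (ι : Y₁ →L[ℝ] Y) (hι : Function.Injective ι)
    (J : Set ℝ) (hJ : J = Set.Ici (0 : ℝ) ∨ ∃ T : ℝ, 0 < T ∧ J = Set.Icc 0 T)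
    (Γ : ℝ → ℝ → Y →L[ℝ] Y)
    (hId : ∀ t ∈ J, Γ t t = ContinuousLinearMap.id ℝ Y)
    (hSemi : ∀ s r t : ℝ, s ∈ J → r ∈ J → t ∈ J → s ≤ r → r ≤ t →
      ∀ f : Y, Γ s r (Γ r t f) = Γ s t f)
    (A : ℝ → Y₁ →L[ℝ] Y)
    (hGen : ∀ t ∈ J, ∀ f : Y₁,
      Tendsto (fun h : ℝ => h⁻¹ • (Γ t (t + h) (ι f) - ι f))
        (𝓝[{h : ℝ | 0 < h ∧ t + h ∈ J}] 0) (𝓝 (A t f)) ∧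
      Tendsto (fun h : ℝ => h⁻¹ • (Γ (t - h) t (ι f) - ι f))
        (𝓝[{h : ℝ | 0 < h ∧ t - h ∈ J}] 0) (𝓝 (A t f)))
    (htCont : ∀ s ∈ J, ∀ f : Y, ContinuousOn (fun u => Γ s u f) {u ∈ J | s ≤ u})
    (hDeriv : ∀ s t : ℝ, s ∈ J → t ∈ J → s ≤ t → ∀ f : Y₁,
      HasDerivWithinAt (fun u => Γ s u (ι f)) (Γ s t (A t f)) {u ∈ J | s ≤ u} t)
    (hNormInt : ∀ s t : ℝ, s ∈ J → t ∈ J → s ≤ t →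
      IntegrableOn (fun u => ‖A u‖) (Set.Icc s t)) :
    ∀ s t : ℝ, s ∈ J → t ∈ J → s ≤ t → ∀ f : Y₁,
      IntegrableOn (fun u => Γ s u (A u f)) (Set.Icc s t) ∧
      Γ s t (ι f) - ι f = ∫ u in s..t, Γ s u (A u f) := by

  intro s t hs ht hst f
  have hIccJ : Set.Icc s t ⊆ J := by
    rcases hJ with h | ⟨T, hT, h⟩
    · subst h; intro u hu; exact le_trans hs hu.1
    · subst h; intro u hu; exact ⟨le_trans hs.1 hu.1, le_trans hu.2 ht.2⟩
  have hIccS : Set.Icc s t ⊆ {u ∈ J | s ≤ u} := fun u hu => ⟨hIccJ hu, hu.1⟩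
  set g : ℝ → Y := fun u => Γ s u (ι f) with hg
  set g' : ℝ → Y := fun u => Γ s u (A u f) with hg'
  have hcont : ContinuousOn g (Set.Icc s t) := (htCont s hs (ι f)).mono hIccS
  have hderivAt : ∀ u ∈ Set.Ioo s t, HasDerivAt g (g' u) u := by
    intro u hu
    have hu' : u ∈ Set.Icc s t := Set.Ioo_subset_Icc_self hu
    have hmem : {u ∈ J | s ≤ u} ∈ 𝓝 u :=
      mem_nhds_iff.mpr ⟨Set.Ioo s t, fun v hv => hIccS (Set.Ioo_subset_Icc_self hv),
        isOpen_Ioo, hu⟩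
    exact (hDeriv s u hs (hIccJ hu') hu'.1 f).hasDerivAt hmem
  have h1 : ∀ u ∈ Set.Ioo s t, deriv g u = g' u := fun u hu => (hderivAt u hu).deriv
  have haeq : (deriv g) =ᵐ[volume.restrict (Set.Icc s t)] g' := by
    rw [← Measure.restrict_congr_set Ioo_ae_eq_Icc]
    filter_upwards [ae_restrict_mem measurableSet_Ioo] with u hu
    exact h1 u hu
  have hmeasg' : AEStronglyMeasurable g' (volume.restrict (Set.Icc s t)) :=
    ((stronglyMeasurable_deriv g).aestronglyMeasurable).congr haeq
  have hbdd : ∃ C, ∀ u ∈ Set.Icc s t, ‖Γ s u‖ ≤ C := by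
    have hc : ∀ x : Y, ∃ C, ∀ i : Set.Icc s t, ‖Γ s (i : ℝ) x‖ ≤ C := by
      intro x
      have hc2 : ContinuousOn (fun u => Γ s u x) (Set.Icc s t) := (htCont s hs x).mono hIccS
      rcases (isCompact_Icc.bddAbove_image hc2.norm) with ⟨C, hC⟩
      exact ⟨C, fun i => hC ⟨(i : ℝ), i.2, rfl⟩⟩
    obtain ⟨C, hC⟩ := banach_steinhaus hc
    exact ⟨C, fun u hu => hC ⟨u, hu⟩⟩
  obtain ⟨C, hC⟩ := hbdd
  have hC0 : 0 ≤ C := le_trans (norm_nonneg _) (hC s ⟨le_rfl, hst⟩)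
  have hbound : Integrable (fun u => C * ‖f‖ * ‖A u‖) (volume.restrict (Set.Icc s t)) :=
    (hNormInt s t hs ht hst).const_mul _
  have hInt : IntegrableOn g' (Set.Icc s t) := by
    refine Integrable.mono' hbound hmeasg' ?_
    filter_upwards [ae_restrict_mem measurableSet_Icc] with u hu
    calc ‖Γ s u (A u f)‖ ≤ ‖Γ s u‖ * ‖A u f‖ := (Γ s u).le_opNorm _
      _ ≤ C * ‖A u f‖ := mul_le_mul_of_nonneg_right (hC u hu) (norm_nonneg _)
      _ ≤ C * (‖A u‖ * ‖f‖) :=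
          mul_le_mul_of_nonneg_left ((A u).le_opNorm f) hC0
      _ = C * ‖f‖ * ‖A u‖ := by ring
  have hII : IntervalIntegrable g' volume s t :=
    (intervalIntegrable_iff_integrableOn_Ioc_of_le hst).mpr
      (hInt.mono_set Set.Ioc_subset_Icc_self)
  have hFTC := intervalIntegral.integral_eq_sub_of_hasDeriv_right_of_le hst hcont
    (fun u hu => (hderivAt u hu).hasDerivWithinAt) hII
  refine ⟨hInt, ?_⟩
  rw [hFTC]
  simp only [hg, hId s hs, ContinuousLinearMap.id_apply]
end

section
/- Let Γ be a regular backward inhomogeneous Y-semigroup with generator A, let s ∈ J and G_s ∈ B(Y). Suppose G : J ∩ [s,∞) → B(Y) is a regular solution of the Cauchy problem, meaning: G is Y-strongly continuous (for every f ∈ Y, t ↦ G(t)f is continuous in the Y-norm), G(s) = G_s, and for every t ∈ J with t ≥ s and every f ∈ Y₁ the map t ↦ G(t)f is differentiable with d/dt G(t)f = G(t)A(t)f in Y. Then G(t)f = G_s Γ(s,t)f for all t ∈ J with t ≥ s and all f ∈ Y₁. -/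
open Filter Topology Set MeasureTheory

/-- Let `Γ` be a regular backward inhomogeneous `Y`-semigroup with generator
`A` (regularity: `Y₁ ⊆ D(A)` via `hGen`, `Γ` preserves `Y₁` via `Γ₁`/`hΓ₁`, the backward and
forward derivative formulas `hsDeriv`/`htDeriv` hold, and `u ↦ Γ(s,u)A(u)f` is Bochner
integrable on `[s,t]`).  Let `s ∈ J` and `Gs ∈ B(Y)`.  If `G : J(s) → B(Y)` is a regular
solution of the Cauchy problem `d/dt G(t)f = G(t)A(t)f`, `G(s) = Gs`, i.e. `G` is `Y`-strongly
continuous and satisfies the Cauchy problem, then `G(t)f = Gs Γ(s,t)f` for all `t ∈ J`,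
`t ≥ s`, and all `f ∈ Y₁`. -/
theorem stmt_3
    {Y : Type*} [NormedAddCommGroup Y] [NormedSpace ℝ Y] [CompleteSpace Y]
    [TopologicalSpace.SeparableSpace Y]
    {Y₁ : Type*} [NormedAddCommGroup Y₁] [NormedSpace ℝ Y₁] [CompleteSpace Y₁]
    [TopologicalSpace.SeparableSpace Y₁]
    (ι : Y₁ →L[ℝ] Y) (hι : Function.Injective ι)
    (J : Set ℝ) (hJ : J = Set.Ici (0 : ℝ) ∨ ∃ T : ℝ, 0 < T ∧ J = Set.Icc 0 T)
    (Γ : ℝ → ℝ → Y →L[ℝ] Y)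
    (hId : ∀ t ∈ J, Γ t t = ContinuousLinearMap.id ℝ Y)
    (hSemi : ∀ s r t : ℝ, s ∈ J → r ∈ J → t ∈ J → s ≤ r → r ≤ t →
      ∀ f : Y, Γ s r (Γ r t f) = Γ s t f)
    (A : ℝ → Y₁ → Y)
    (hGen : ∀ t ∈ J, ∀ f : Y₁,
      Tendsto (fun h : ℝ => h⁻¹ • (Γ t (t + h) (ι f) - ι f))
        (𝓝[{h : ℝ | 0 < h ∧ t + h ∈ J}] 0) (𝓝 (A t f)) ∧
      Tendsto (fun h : ℝ => h⁻¹ • (Γ (t - h) t (ι f) - ι f))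
        (𝓝[{h : ℝ | 0 < h ∧ t - h ∈ J}] 0) (𝓝 (A t f)))
    (Γ₁ : ℝ → ℝ → Y₁ → Y₁)
    (hΓ₁ : ∀ s t : ℝ, s ∈ J → t ∈ J → s ≤ t → ∀ f : Y₁, ι (Γ₁ s t f) = Γ s t (ι f))
    (hsDeriv : ∀ s t : ℝ, s ∈ J → t ∈ J → s ≤ t → ∀ f : Y₁,
      HasDerivWithinAt (fun u => Γ u t (ι f)) (-(A s (Γ₁ s t f))) {u ∈ J | u ≤ t} s)
    (htDeriv : ∀ s t : ℝ, s ∈ J → t ∈ J → s ≤ t → ∀ f : Y₁,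
      HasDerivWithinAt (fun u => Γ s u (ι f)) (Γ s t (A t f)) {u ∈ J | s ≤ u} t)
    (hIntReg : ∀ s t : ℝ, s ∈ J → t ∈ J → s ≤ t → ∀ f : Y₁,
      IntegrableOn (fun u => Γ s u (A u f)) (Set.Icc s t))
    (s : ℝ) (hs : s ∈ J) (Gs : Y →L[ℝ] Y)
    (G : ℝ → Y →L[ℝ] Y)
    (hGcont : ∀ f : Y, ContinuousOn (fun t => G t f) {t ∈ J | s ≤ t})
    (hGinit : G s = Gs)
    (hGderiv : ∀ t : ℝ, t ∈ J → s ≤ t → ∀ f : Y₁,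
      HasDerivWithinAt (fun u => G u (ι f)) (G t (A t f)) {u ∈ J | s ≤ u} t) :
    ∀ t : ℝ, t ∈ J → s ≤ t → ∀ f : Y₁, G t (ι f) = Gs (Γ s t (ι f)) := by
  intro t ht hst f
  have hIcc : Set.Icc s t ⊆ J := by
    rcases hJ with h | ⟨T, hT, h⟩
    · subst h; intro x hx; exact le_trans hs hx.1
    · subst h; intro x hx; exact ⟨le_trans hs.1 hx.1, le_trans hx.2 ht.2⟩
  set g : ℝ → Y := fun u => Γ u t (ι f) with hg_def
  set φ : ℝ → Y := fun u => G u (g u) with hφ_def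
  -- uniform bound on ‖G u‖ over Icc s t
  obtain ⟨M, hM⟩ : ∃ M, ∀ u ∈ Set.Icc s t, ‖G u‖ ≤ M := by
    have key : ∀ x : Y, ∃ C, ∀ u : Set.Icc s t, ‖G (u : ℝ) x‖ ≤ C := by
      intro x
      have hc : ContinuousOn (fun u => G u x) (Set.Icc s t) :=
        (hGcont x).mono (fun u hu => ⟨hIcc hu, hu.1⟩)
      obtain ⟨C, hC⟩ := (isCompact_Icc (a := s) (b := t)).exists_bound_of_continuousOn hc
      exact ⟨C, fun u => hC u u.2⟩
    obtain ⟨M, hM⟩ := banach_steinhaus key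
    exact ⟨M, fun u hu => hM ⟨u, hu⟩⟩
  -- derivative of φ is zero on Icc s t
  have hderiv : ∀ u ∈ Set.Icc s t, HasDerivWithinAt φ 0 (Set.Icc s t) u := by
    intro u hu
    have huJ : u ∈ J := hIcc hu
    set a : Y := A u (Γ₁ u t f) with ha_def
    have hgu : ι (Γ₁ u t f) = g u := hΓ₁ u t huJ ht hu.2 f
    have hsub1 : Set.Icc s t ⊆ {v ∈ J | v ≤ t} := fun v hv => ⟨hIcc hv, hv.2⟩
    have hsub2 : Set.Icc s t ⊆ {v ∈ J | s ≤ v} := fun v hv => ⟨hIcc hv, hv.1⟩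
    have hg : HasDerivWithinAt g (-a) (Set.Icc s t) u :=
      (hsDeriv u t huJ ht hu.2 f).mono hsub1
    have hG2 : HasDerivWithinAt (fun v => G v (g u)) (G u a) (Set.Icc s t) u := by
      have := (hGderiv u huJ hu.1 (Γ₁ u t f)).mono hsub2
      rwa [hgu] at this
    rw [hasDerivWithinAt_iff_tendsto_slope]
    have hgs : Tendsto (slope g u) (𝓝[Set.Icc s t \ {u}] u) (𝓝 (-a)) :=
      hasDerivWithinAt_iff_tendsto_slope.mp hg
    have hG2s : Tendsto (slope (fun v => G v (g u)) u) (𝓝[Set.Icc s t \ {u}] u)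
        (𝓝 (G u a)) := hasDerivWithinAt_iff_tendsto_slope.mp hG2
    have he : Tendsto (fun v => slope g u v + a) (𝓝[Set.Icc s t \ {u}] u) (𝓝 0) := by
      simpa using hgs.add_const a
    have part1 : Tendsto (fun v => G v (slope g u v + a)) (𝓝[Set.Icc s t \ {u}] u) (𝓝 0) := by
      apply squeeze_zero_norm' (a := fun v => M * ‖slope g u v + a‖)
      · filter_upwards [self_mem_nhdsWithin] with v hv
        calc ‖G v (slope g u v + a)‖ ≤ ‖G v‖ * ‖slope g u v + a‖ := (G v).le_opNorm _
          _ ≤ M * ‖slope g u v + a‖ :=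
            mul_le_mul_of_nonneg_right (hM v hv.1) (norm_nonneg _)
      · simpa using he.norm.const_mul M
    have part2 : Tendsto (fun v => G v (-a)) (𝓝[Set.Icc s t \ {u}] u) (𝓝 (G u (-a))) := by
      have hc := (hGcont (-a)) u ⟨huJ, hu.1⟩
      exact hc.mono_left (nhdsWithin_mono u (fun v hv => ⟨hIcc hv.1, hv.1.1⟩))
    have tendstoA : Tendsto (fun v => G v (slope g u v))
        (𝓝[Set.Icc s t \ {u}] u) (𝓝 (G u (-a))) := by
      have h := part1.add part2
      rw [zero_add] at h
      exact h.congr fun v => by rw [← map_add, add_neg_cancel_right]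
    have key : ∀ v, slope φ u v = G v (slope g u v) + slope (fun w => G w (g u)) u v := by
      intro v
      simp only [slope_def_module, hφ_def, ContinuousLinearMap.map_smul, map_sub, smul_sub]
      abel
    have hsum := tendstoA.add hG2s
    have hzero : G u (-a) + G u a = 0 := by
      rw [← map_add, neg_add_cancel, map_zero]
    rw [hzero] at hsum
    exact hsum.congr fun v => (key v).symm
  have hconst : ‖φ t - φ s‖ ≤ 0 * ‖t - s‖ :=
    (convex_Icc s t).norm_image_sub_le_of_norm_hasDerivWithin_le
      (f' := fun _ => (0 : Y)) hderiv (fun x _ => by simp)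
      (Set.left_mem_Icc.mpr hst) (Set.right_mem_Icc.mpr hst)
  rw [zero_mul] at hconst
  have heq : φ t = φ s := by
    have := norm_sub_eq_zero_iff.mp (le_antisymm hconst (norm_nonneg _))
    exact this
  have hφt : φ t = G t (ι f) := by
    simp only [hφ_def, hg_def, hId t ht, ContinuousLinearMap.id_apply]
  have hφs : φ s = Gs (Γ s t (ι f)) := by
    simp only [hφ_def, hg_def, hGinit]
  rw [← hφt, heq, hφs]
end

section
/- Let Γ be a regular backward inhomogeneous Y-semigroup with generator A, let (s,t) ∈ Δ_J, and assume that for every u ∈ J the restriction of A(u) to Y₁ is a bounded operator from Y₁ to Y and that u ↦ ‖A(u)‖_{B(Y₁,Y)} is integrable on [s,t]. Then for every f ∈ D(A ∈ Y₁) := {f ∈ D(A) ∩ Y₁ : A(u)f ∈ Y₁ for all u ∈ J} one has Γ(s,t)f = f + ∫_s^t A(u)f du + ∫_s^t ∫_s^u Γ(s,r)A(r)A(u)f dr du, where all integrals are Bochner integrals in Y. -/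
open Filter Topology Set MeasureTheory

/-- Let `Γ` be a regular backward inhomogeneous `Y`-semigroup with generator
`A`, where each `A(u)` restricted to `Y₁` is a bounded operator `Y₁ → Y`
(so `A : ℝ → Y₁ →L[ℝ] Y`), let `(s,t) ∈ Δ_J`, and assume `u ↦ ‖A(u)‖_{B(Y₁,Y)}` is integrable
on `[s,t]`.  Then for every `f ∈ D(A ∈ Y₁)`, i.e. `f ∈ Y₁` with `A(u)f ∈ Y₁` for all `u ∈ J`
(the `Y₁`-valued version being `Af` with `ι (Af u) = A u f`), one has
`Γ(s,t)f = f + ∫_s^t A(u)f du + ∫_s^t ∫_s^u Γ(s,r)A(r)A(u)f dr du`. -/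
theorem stmt_5
    {Y : Type*} [NormedAddCommGroup Y] [NormedSpace ℝ Y] [CompleteSpace Y]
    [TopologicalSpace.SeparableSpace Y]
    {Y₁ : Type*} [NormedAddCommGroup Y₁] [NormedSpace ℝ Y₁] [CompleteSpace Y₁]
    [TopologicalSpace.SeparableSpace Y₁]
    (ι : Y₁ →L[ℝ] Y) (hι : Function.Injective ι)
    (J : Set ℝ) (hJ : J = Set.Ici (0 : ℝ) ∨ ∃ T : ℝ, 0 < T ∧ J = Set.Icc 0 T)
    (Γ : ℝ → ℝ → Y →L[ℝ] Y)
    (hId : ∀ t ∈ J, Γ t t = ContinuousLinearMap.id ℝ Y)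
    (hSemi : ∀ s r t : ℝ, s ∈ J → r ∈ J → t ∈ J → s ≤ r → r ≤ t →
      ∀ f : Y, Γ s r (Γ r t f) = Γ s t f)
    (A : ℝ → Y₁ →L[ℝ] Y)
    (hGen : ∀ t ∈ J, ∀ f : Y₁,
      Tendsto (fun h : ℝ => h⁻¹ • (Γ t (t + h) (ι f) - ι f))
        (𝓝[{h : ℝ | 0 < h ∧ t + h ∈ J}] 0) (𝓝 (A t f)) ∧
      Tendsto (fun h : ℝ => h⁻¹ • (Γ (t - h) t (ι f) - ι f))
        (𝓝[{h : ℝ | 0 < h ∧ t - h ∈ J}] 0) (𝓝 (A t f)))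
    (Γ₁ : ℝ → ℝ → Y₁ → Y₁)
    (hΓ₁ : ∀ s t : ℝ, s ∈ J → t ∈ J → s ≤ t → ∀ f : Y₁, ι (Γ₁ s t f) = Γ s t (ι f))
    (hsDeriv : ∀ s t : ℝ, s ∈ J → t ∈ J → s ≤ t → ∀ f : Y₁,
      HasDerivWithinAt (fun u => Γ u t (ι f)) (-(A s (Γ₁ s t f))) {u ∈ J | u ≤ t} s)
    (htDeriv : ∀ s t : ℝ, s ∈ J → t ∈ J → s ≤ t → ∀ f : Y₁,
      HasDerivWithinAt (fun u => Γ s u (ι f)) (Γ s t (A t f)) {u ∈ J | s ≤ u} t)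
    (hIntReg : ∀ s t : ℝ, s ∈ J → t ∈ J → s ≤ t → ∀ f : Y₁,
      IntegrableOn (fun u => Γ s u (A u f)) (Set.Icc s t))
    (s t : ℝ) (hsJ : s ∈ J) (htJ : t ∈ J) (hst : s ≤ t)
    (hNormInt : IntegrableOn (fun u => ‖A u‖) (Set.Icc s t))
    (f : Y₁) (Af : ℝ → Y₁) (hAf : ∀ u ∈ J, ι (Af u) = A u f) :
    Γ s t (ι f) = ι f + (∫ u in s..t, A u f) +
      ∫ u in s..t, ∫ r in s..u, Γ s r (A r (Af u)) := by
  -- Basic facts about J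
  have hJmeas : MeasurableSet J := by
    rcases hJ with h | ⟨T, hT, h⟩ <;> rw [h]
    · exact measurableSet_Ici
    · exact measurableSet_Icc
  have hs0 : (0:ℝ) ≤ s := by
    rcases hJ with h | ⟨T, hT, h⟩
    · rw [h] at hsJ; exact hsJ
    · rw [h] at hsJ; exact hsJ.1
  have hmemJ : ∀ x : ℝ, 0 ≤ x → x ≤ t → x ∈ J := by
    intro x hx0 hxt
    rcases hJ with h | ⟨T, hT, h⟩
    · rw [h]; exact hx0
    · rw [h] at htJ ⊢; exact ⟨hx0, hxt.trans htJ.2⟩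
  have hIccJ : ∀ x ∈ Icc s t, x ∈ J := fun x hx => hmemJ x (hs0.trans hx.1) hx.2
  -- Fundamental theorem of calculus for the propagator
  have key : ∀ b : ℝ, b ∈ J → s ≤ b → b ≤ t → ∀ g : Y₁,
      (∫ r in s..b, Γ s r (A r g)) = Γ s b (ι g) - ι g := by
    intro b hbJ hsb hbt g
    have hIccbJ : ∀ x ∈ Icc s b, x ∈ J := fun x hx => hIccJ x ⟨hx.1, hx.2.trans hbt⟩
    have hsub : Icc s b ⊆ {u ∈ J | s ≤ u} := fun x hx => ⟨hIccbJ x hx, hx.1⟩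
    have hcont : ContinuousOn (fun u => Γ s u (ι g)) (Icc s b) := fun x hx =>
      ((htDeriv s x hsJ (hIccbJ x hx) hx.1 g).continuousWithinAt).mono hsub
    have hderiv : ∀ x ∈ Ioo s b, HasDerivWithinAt (fun u => Γ s u (ι g))
        (Γ s x (A x g)) (Ioi x) x := by
      intro x hx
      refine (htDeriv s x hsJ (hIccbJ x ⟨hx.1.le, hx.2.le⟩) hx.1.le g).mono_of_mem_nhdsWithin ?_
      refine mem_nhdsWithin_of_mem_nhds (Filter.mem_of_superset (isOpen_Ioo.mem_nhds hx) ?_)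
      exact fun y hy => ⟨hIccbJ y ⟨hy.1.le, hy.2.le⟩, hy.1.le⟩
    have hint : IntervalIntegrable (fun u => Γ s u (A u g)) volume s b :=
      (intervalIntegrable_iff_integrableOn_Ioc_of_le hsb).mpr
        ((hIntReg s b hsJ hbJ hsb g).mono_set Ioc_subset_Icc_self)
    have h := intervalIntegral.integral_eq_sub_of_hasDeriv_right_of_le hsb hcont hderiv hint
    rw [h, hId s hsJ]
    rfl
  -- Measurability of u ↦ Γ (u - c) u (ι f) on (c, ∞) ∩ (s, t]
  have hKc : ∀ c : ℝ, 0 < c →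
      AEStronglyMeasurable (fun u => Γ (u - c) u (ι f)) (volume.restrict (Ioi c ∩ Ioc s t)) := by
    intro c hc
    set D : Set ℝ := Ioi c ∩ Ioc s t with hDdef
    have hDmeas : MeasurableSet D := measurableSet_Ioi.inter measurableSet_Ioc
    set δ : ℕ → ℝ := fun m => c / ((m : ℝ) + 1) with hδdef
    have hδpos : ∀ m, 0 < δ m := fun m => div_pos hc (by positivity)
    have hδle : ∀ m : ℕ, δ m ≤ c := fun m =>
      div_le_self hc.le (le_add_of_nonneg_left (Nat.cast_nonneg m))
    have hq_lb : ∀ (m : ℕ) (u : ℝ), u - c ≤ (⌈(u - c) / δ m⌉ : ℝ) * δ m := by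
      intro m u
      calc u - c = ((u - c) / δ m) * δ m := (div_mul_cancel₀ _ (hδpos m).ne').symm
        _ ≤ (⌈(u - c) / δ m⌉ : ℝ) * δ m :=
            mul_le_mul_of_nonneg_right (Int.le_ceil _) (hδpos m).le
    have hq_ub : ∀ (m : ℕ) (u : ℝ), (⌈(u - c) / δ m⌉ : ℝ) * δ m ≤ u - c + δ m := by
      intro m u
      calc (⌈(u - c) / δ m⌉ : ℝ) * δ m ≤ ((u - c) / δ m + 1) * δ m :=
            mul_le_mul_of_nonneg_right (Int.ceil_lt_add_one _).le (hδpos m).le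
        _ = u - c + δ m := by rw [add_mul, one_mul, div_mul_cancel₀ _ (hδpos m).ne']
    have hKm_meas : ∀ m : ℕ, AEStronglyMeasurable
        (fun u => Γ ((⌈(u - c) / δ m⌉ : ℝ) * δ m) u (ι f)) (volume.restrict D) := by
      intro m
      have hcover : D = ⋃ k : ℤ, D ∩ {u : ℝ | ⌈(u - c) / δ m⌉ = k} := by
        ext u
        simp only [mem_iUnion, mem_inter_iff, mem_setOf_eq]
        exact ⟨fun hu => ⟨⌈(u - c) / δ m⌉, hu, rfl⟩, fun ⟨k, hu, _⟩ => hu⟩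
      rw [hcover, aestronglyMeasurable_iUnion_iff]
      intro k
      have hstripmeas : MeasurableSet {u : ℝ | ⌈(u - c) / δ m⌉ = k} :=
        (Int.measurable_ceil.comp ((measurable_id.sub_const c).div_const (δ m))) (measurableSet_singleton k)
      by_cases hne : (D ∩ {u : ℝ | ⌈(u - c) / δ m⌉ = k}).Nonempty
      · obtain ⟨u₀, hu₀D, hu₀k⟩ := hne
        set v : ℝ := (k : ℝ) * δ m with hvdef
        have hv₀ : v = (⌈(u₀ - c) / δ m⌉ : ℝ) * δ m := by
          rw [hvdef, hu₀k]
        have hvle : ∀ u ∈ D ∩ {u : ℝ | ⌈(u - c) / δ m⌉ = k}, v ≤ u := by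
          rintro u ⟨huD, huk⟩
          have h1 : v = (⌈(u - c) / δ m⌉ : ℝ) * δ m := by rw [hvdef, huk]
          rw [h1]
          have := hq_ub m u
          have h2 : δ m ≤ c := hδle m
          linarith
        have hvpos : 0 < v := by
          have h1 := hq_lb m u₀
          rw [← hv₀] at h1
          have : c < u₀ := hu₀D.1
          linarith
        have hvJ : v ∈ J := by
          refine hmemJ v hvpos.le ?_
          exact (hvle u₀ ⟨hu₀D, hu₀k⟩).trans hu₀D.2.2
        have hcontv : ContinuousOn (fun u => Γ v u (ι f)) {u ∈ J | v ≤ u} := fun x hx =>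
          (htDeriv v x hvJ hx.1 hx.2 f).continuousWithinAt
        have hSmeas : MeasurableSet {u ∈ J | v ≤ u} := hJmeas.inter measurableSet_Ici
        have hbase : AEStronglyMeasurable (fun u => Γ v u (ι f))
            (volume.restrict (D ∩ {u : ℝ | ⌈(u - c) / δ m⌉ = k})) := by
          refine (hcontv.aestronglyMeasurable hSmeas).mono_measure
            (Measure.restrict_mono ?_ le_rfl)
          rintro u ⟨huD, huk⟩
          exact ⟨hIccJ u ⟨huD.2.1.le, huD.2.2⟩, hvle u ⟨huD, huk⟩⟩
        refine hbase.congr ?_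
        rw [Filter.EventuallyEq, ae_restrict_iff' (hDmeas.inter hstripmeas)]
        refine ae_of_all _ ?_
        rintro u ⟨-, huk⟩
        rw [show ⌈(u - c) / δ m⌉ = k from huk, hvdef]
      · rw [not_nonempty_iff_eq_empty] at hne
        rw [hne, Measure.restrict_empty]
        exact aestronglyMeasurable_zero_measure _
    have hlim : ∀ u ∈ D, Tendsto (fun m : ℕ => Γ ((⌈(u - c) / δ m⌉ : ℝ) * δ m) u (ι f))
        atTop (𝓝 (Γ (u - c) u (ι f))) := by
      intro u hu
      have huc : c < u := hu.1
      have hut : u ≤ t := hu.2.2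
      have hucJ : u - c ∈ J := hmemJ _ (by linarith) (by linarith)
      have huJ : u ∈ J := hIccJ u ⟨hu.2.1.le, hut⟩
      have hcw : ContinuousWithinAt (fun v => Γ v u (ι f)) {v ∈ J | v ≤ u} (u - c) :=
        (hsDeriv (u - c) u hucJ huJ (by linarith) f).continuousWithinAt
      refine hcw.tendsto.comp ?_
      rw [tendsto_nhdsWithin_iff]
      constructor
      · have hδ0 : Tendsto δ atTop (𝓝 0) :=
          Tendsto.div_atTop tendsto_const_nhds
            (tendsto_atTop_add_const_right _ 1 tendsto_natCast_atTop_atTop)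
        have hup : Tendsto (fun m : ℕ => u - c + δ m) atTop (𝓝 (u - c)) := by
          simpa using tendsto_const_nhds.add hδ0
        exact tendsto_of_tendsto_of_tendsto_of_le_of_le tendsto_const_nhds hup
          (fun m => hq_lb m u) (fun m => hq_ub m u)
      · refine Filter.Eventually.of_forall (fun m => ?_)
        have h1 := hq_lb m u
        have h2 := hq_ub m u
        have h3 := hδle m
        have hle : (⌈(u - c) / δ m⌉ : ℝ) * δ m ≤ u := by linarith
        exact ⟨hmemJ _ (by linarith) (hle.trans hut), hle⟩
    exact aestronglyMeasurable_of_tendsto_ae atTop hKm_meas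
      ((ae_restrict_iff' hDmeas).mpr (ae_of_all _ hlim))
  -- Measurability of u ↦ A u f
  have hAfmeas : AEStronglyMeasurable (fun u => A u f) (volume.restrict (Ioc s t)) := by
    set F : ℕ → ℝ → Y := fun n =>
      (Ioi (((n : ℝ) + 1)⁻¹)).indicator
        (fun u => ((n : ℝ) + 1) • (Γ (u - ((n : ℝ) + 1)⁻¹) u (ι f) - ι f)) with hFdef
    have hFmeas : ∀ n : ℕ, AEStronglyMeasurable (F n) (volume.restrict (Ioc s t)) := by
      intro n
      have hc : (0 : ℝ) < ((n : ℝ) + 1)⁻¹ := by positivity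
      rw [hFdef]
      rw [aestronglyMeasurable_indicator_iff measurableSet_Ioi,
        Measure.restrict_restrict measurableSet_Ioi]
      exact ((hKc _ hc).sub aestronglyMeasurable_const).const_smul _
    have hptlim : ∀ u ∈ Ioc s t, Tendsto (fun n : ℕ => F n u) atTop (𝓝 (A u f)) := by
      intro u hu
      have hu0 : 0 < u := lt_of_le_of_lt hs0 hu.1
      have huJ : u ∈ J := hIccJ u ⟨hu.1.le, hu.2⟩
      have hgen := (hGen u huJ f).2
      have hinv : Tendsto (fun n : ℕ => ((n : ℝ) + 1)⁻¹) atTop (𝓝 0) :=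
        tendsto_inv_atTop_zero.comp (tendsto_atTop_add_const_right _ 1 tendsto_natCast_atTop_atTop)
      have hlt : ∀ᶠ n : ℕ in atTop, ((n : ℝ) + 1)⁻¹ < u := hinv.eventually_lt_const hu0
      have hseq : Tendsto (fun n : ℕ => ((n : ℝ) + 1)⁻¹) atTop
          (𝓝[{h : ℝ | 0 < h ∧ u - h ∈ J}] 0) := by
        rw [tendsto_nhdsWithin_iff]
        refine ⟨hinv, ?_⟩
        filter_upwards [hlt] with n hn
        refine ⟨by positivity, hmemJ _ (by linarith) (by linarith [hu.2, (by positivity : (0:ℝ) < ((n:ℝ)+1)⁻¹)])⟩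
      refine Filter.Tendsto.congr' ?_ (hgen.comp hseq)
      filter_upwards [hlt] with n hn
      have hmem : u ∈ Ioi (((n : ℝ) + 1)⁻¹) := hn
      rw [hFdef]
      simp only [Function.comp_apply, indicator_of_mem hmem, inv_inv]
    exact aestronglyMeasurable_of_tendsto_ae atTop hFmeas
      ((ae_restrict_iff' measurableSet_Ioc).mpr (ae_of_all _ hptlim))
  -- Integrability of u ↦ A u f
  have hAfint : IntegrableOn (fun u => A u f) (Ioc s t) := by
    refine Integrable.mono' ((hNormInt.mono_set Ioc_subset_Icc_self).mul_const ‖f‖)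
      hAfmeas (ae_of_all _ (fun u => (A u).le_opNorm f))
  -- Decomposition of integrand
  have h_dec : ∀ u ∈ Ioc s t,
      (∫ r in s..u, Γ s r (A r (Af u))) = Γ s u (A u f) - A u f := by
    intro u hu
    have huJ : u ∈ J := hIccJ u ⟨hu.1.le, hu.2⟩
    have h := key u huJ hu.1.le hu.2 (Af u)
    rwa [hAf u huJ] at h
  have hgint : IntegrableOn (fun u => Γ s u (A u f)) (Ioc s t) :=
    (hIntReg s t hsJ htJ hst f).mono_set Ioc_subset_Icc_self
  have hpint : IntegrableOn (fun u => ∫ r in s..u, Γ s r (A r (Af u))) (Ioc s t) := by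
    refine (hgint.sub hAfint).congr ?_
    rw [Filter.EventuallyEq, ae_restrict_iff' measurableSet_Ioc]
    exact ae_of_all _ (fun u hu => (h_dec u hu).symm)
  have hAf_ii : IntervalIntegrable (fun u => A u f) volume s t :=
    (intervalIntegrable_iff_integrableOn_Ioc_of_le hst).mpr hAfint
  have hp_ii : IntervalIntegrable (fun u => ∫ r in s..u, Γ s r (A r (Af u))) volume s t :=
    (intervalIntegrable_iff_integrableOn_Ioc_of_le hst).mpr hpint
  have hmain := key t htJ hst le_rfl f
  have hsplit : (∫ u in s..t, Γ s u (A u f)) =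
      (∫ u in s..t, A u f) + ∫ u in s..t, ∫ r in s..u, Γ s r (A r (Af u)) := by
    rw [← intervalIntegral.integral_add hAf_ii hp_ii]
    refine intervalIntegral.integral_congr_ae ?_
    refine ae_of_all _ (fun u hu => ?_)
    rw [uIoc_of_le hst] at hu
    rw [h_dec u hu]
    abel
  rw [add_assoc, ← hsplit, hmain]
  abel
end

section
/- Let Γ be a regular backward inhomogeneous Y-semigroup with generator A, let (s,t) ∈ Δ_J, and assume: for every u ∈ J, A(u) restricted to Y₁ is a bounded operator from Y₁ to Y with u ↦ ‖A(u)‖_{B(Y₁,Y)} integrable on [s,t]; A is Y₁-strongly continuous (for each f ∈ Y₁, u ↦ A(u)f is continuous in the Y-norm); and for f as below the maps u ↦ Γ(s,u)A(u)²f and u ↦ ∫_s^u Γ(s,r)A(r)A'(u)f dr are Bochner integrable on [s,t]. Then for every f ∈ D(A') := {f ∈ D(A) ∩ Y₁ : A(u)f ∈ Y₁ for all u ∈ J, and for all u ∈ J the limit A'(u)f := Y₁-lim_{h→0} (A(u+h)f − A(u)f)/h exists in Y₁}, one has the second-order Taylor formula Γ(s,t)f = f + ∫_s^t A(u)f du +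 ∫_s^t (t−u) Γ(s,u)A(u)²f du + ∫_s^t (t−u) ∫_s^u Γ(s,r)A(r)A'(u)f dr du (Bochner integrals in Y). -/
open Filter Topology Set MeasureTheory

/-- Second-order Taylor formula for a regular backward inhomogeneous
`Y`-semigroup `Γ` with generator `A : ℝ → Y₁ →L[ℝ] Y` (bounded `Y₁ → Y` with integrable
operator norm on `[s,t]`), `A` being `Y₁`-strongly continuous.  For `f ∈ D(A')`, i.e.
`f ∈ Y₁` with `A(u)f ∈ Y₁` for all `u ∈ J` (encoded by `Af`) and such that the `Y₁`-limit
`A'(u)f = Y₁-lim_{h→0} (A(u+h)f − A(u)f)/h` exists (encoded by `A'f` and `hA'f`), and under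
the integrability assumptions `hInt2`, `hInt3`, one has
`Γ(s,t)f = f + ∫_s^t A(u)f du + ∫_s^t (t−u) Γ(s,u)A(u)²f du
  + ∫_s^t (t−u) ∫_s^u Γ(s,r)A(r)A'(u)f dr du`. -/
theorem stmt_6
    {Y : Type*} [NormedAddCommGroup Y] [NormedSpace ℝ Y] [CompleteSpace Y]
    [TopologicalSpace.SeparableSpace Y]
    {Y₁ : Type*} [NormedAddCommGroup Y₁] [NormedSpace ℝ Y₁] [CompleteSpace Y₁]
    [TopologicalSpace.SeparableSpace Y₁]
    (ι : Y₁ →L[ℝ] Y) (hι : Function.Injective ι)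
    (J : Set ℝ) (hJ : J = Set.Ici (0 : ℝ) ∨ ∃ T : ℝ, 0 < T ∧ J = Set.Icc 0 T)
    (Γ : ℝ → ℝ → Y →L[ℝ] Y)
    (hId : ∀ t ∈ J, Γ t t = ContinuousLinearMap.id ℝ Y)
    (hSemi : ∀ s r t : ℝ, s ∈ J → r ∈ J → t ∈ J → s ≤ r → r ≤ t →
      ∀ f : Y, Γ s r (Γ r t f) = Γ s t f)
    (A : ℝ → Y₁ →L[ℝ] Y)
    (hGen : ∀ t ∈ J, ∀ f : Y₁,
      Tendsto (fun h : ℝ => h⁻¹ • (Γ t (t + h) (ι f) - ι f))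
        (𝓝[{h : ℝ | 0 < h ∧ t + h ∈ J}] 0) (𝓝 (A t f)) ∧
      Tendsto (fun h : ℝ => h⁻¹ • (Γ (t - h) t (ι f) - ι f))
        (𝓝[{h : ℝ | 0 < h ∧ t - h ∈ J}] 0) (𝓝 (A t f)))
    (Γ₁ : ℝ → ℝ → Y₁ → Y₁)
    (hΓ₁ : ∀ s t : ℝ, s ∈ J → t ∈ J → s ≤ t → ∀ f : Y₁, ι (Γ₁ s t f) = Γ s t (ι f))
    (hsDeriv : ∀ s t : ℝ, s ∈ J → t ∈ J → s ≤ t → ∀ f : Y₁,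
      HasDerivWithinAt (fun u => Γ u t (ι f)) (-(A s (Γ₁ s t f))) {u ∈ J | u ≤ t} s)
    (htDeriv : ∀ s t : ℝ, s ∈ J → t ∈ J → s ≤ t → ∀ f : Y₁,
      HasDerivWithinAt (fun u => Γ s u (ι f)) (Γ s t (A t f)) {u ∈ J | s ≤ u} t)
    (hIntReg : ∀ s t : ℝ, s ∈ J → t ∈ J → s ≤ t → ∀ f : Y₁,
      IntegrableOn (fun u => Γ s u (A u f)) (Set.Icc s t))
    (s t : ℝ) (hsJ : s ∈ J) (htJ : t ∈ J) (hst : s ≤ t)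
    (hNormInt : IntegrableOn (fun u => ‖A u‖) (Set.Icc s t))
    (hAcont : ∀ g : Y₁, ContinuousOn (fun u => A u g) J)
    (f : Y₁) (Af : ℝ → Y₁) (hAf : ∀ u ∈ J, ι (Af u) = A u f)
    (A'f : ℝ → Y₁)
    (hA'f : ∀ u ∈ J, Tendsto (fun h : ℝ => h⁻¹ • (Af (u + h) - Af u))
      (𝓝[{h : ℝ | h ≠ 0 ∧ u + h ∈ J}] 0) (𝓝 (A'f u)))
    (hInt2 : IntegrableOn (fun u => Γ s u (A u (Af u))) (Set.Icc s t))
    (hInt3 : IntegrableOn (fun u => ∫ r in s..u, Γ s r (A r (A'f u))) (Set.Icc s t)) :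
    Γ s t (ι f) = ι f + (∫ u in s..t, A u f) +
      (∫ u in s..t, (t - u) • Γ s u (A u (Af u))) +
      ∫ u in s..t, (t - u) • ∫ r in s..u, Γ s r (A r (A'f u)) := by
  -- [s,t] ⊆ J
  have hsub : Set.Icc s t ⊆ J := by
    rcases hJ with h | ⟨T, hT, h⟩
    · rw [h] at hsJ ⊢
      exact fun u hu => le_trans hsJ hu.1
    · rw [h] at hsJ htJ ⊢
      exact fun u hu => ⟨le_trans hsJ.1 hu.1, le_trans hu.2 htJ.2⟩
  have hsubset : Set.Icc s t ⊆ {v ∈ J | s ≤ v} := fun v hv => ⟨hsub hv, hv.1⟩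
  -- continuity of u ↦ Γ s u (ι g) on [s,t]
  have hcontΓ : ∀ g : Y₁, ContinuousOn (fun u => Γ s u (ι g)) (Set.Icc s t) := by
    intro g u hu
    exact ((htDeriv s u hsJ (hsub hu) hu.1 g).mono hsubset).continuousWithinAt
  -- key FTC identity
  have keyFTC : ∀ u ∈ Set.Icc s t, ∀ g : Y₁,
      Γ s u (ι g) = ι g + ∫ r in s..u, Γ s r (A r g) := by
    intro u hu g
    have hsu : s ≤ u := hu.1
    have hIccsub : Set.Icc s u ⊆ Set.Icc s t := Set.Icc_subset_Icc le_rfl hu.2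
    have hC : ContinuousOn (fun v => Γ s v (ι g)) (Set.Icc s u) := (hcontΓ g).mono hIccsub
    have hD : ∀ v ∈ Set.Ioo s u, HasDerivAt (fun w => Γ s w (ι g)) (Γ s v (A v g)) v := by
      intro v hv
      have hvm : v ∈ Set.Icc s t := hIccsub ⟨hv.1.le, hv.2.le⟩
      exact ((htDeriv s v hsJ (hsub hvm) hv.1.le g).mono hsubset).hasDerivAt
        (Icc_mem_nhds hv.1 (lt_of_lt_of_le hv.2 hu.2))
    have hI : IntervalIntegrable (fun r => Γ s r (A r g)) volume s u := by
      rw [intervalIntegrable_iff_integrableOn_Icc_of_le hsu]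
      exact hIntReg s u hsJ (hsub hu) hsu g
    have hFTC := intervalIntegral.integral_eq_sub_of_hasDerivAt_of_le hsu hC hD hI
    rw [hId s hsJ] at hFTC
    simp only [ContinuousLinearMap.id_apply] at hFTC
    rw [hFTC]; abel
  -- uniform bound via Banach–Steinhaus
  obtain ⟨M, hM⟩ : ∃ M : ℝ, ∀ u ∈ Set.Icc s t, ∀ g : Y₁, ‖Γ s u (ι g)‖ ≤ M * ‖g‖ := by
    have hpt : ∀ g : Y₁, ∃ C, ∀ u : Set.Icc s t, ‖((Γ s (u : ℝ)).comp ι) g‖ ≤ C := by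
      intro g
      obtain ⟨C, hC⟩ := isCompact_Icc.exists_bound_of_continuousOn (hcontΓ g)
      exact ⟨C, fun u => hC u u.2⟩
    obtain ⟨C, hC⟩ := banach_steinhaus hpt
    refine ⟨C, fun u hu g => ?_⟩
    calc ‖Γ s u (ι g)‖ = ‖((Γ s u).comp ι) g‖ := rfl
      _ ≤ ‖(Γ s u).comp ι‖ * ‖g‖ := ((Γ s u).comp ι).le_opNorm g
      _ ≤ C * ‖g‖ := mul_le_mul_of_nonneg_right (hC ⟨u, hu⟩) (norm_nonneg g)
  -- derivative of Af within [s,t]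
  have hAfd : ∀ u₀ ∈ Set.Icc s t, HasDerivWithinAt Af (A'f u₀) (Set.Icc s t) u₀ := by
    intro u₀ hu₀
    rw [hasDerivWithinAt_iff_tendsto_slope]
    have hmap : Tendsto (fun u : ℝ => u - u₀) (𝓝[Set.Icc s t \ {u₀}] u₀)
        (𝓝[{h : ℝ | h ≠ 0 ∧ u₀ + h ∈ J}] 0) := by
      apply tendsto_nhdsWithin_of_tendsto_nhds_of_eventually_within
      · have h1 : Tendsto (fun u : ℝ => u - u₀) (𝓝 u₀) (𝓝 (u₀ - u₀)) :=
          (continuous_id.sub continuous_const).tendsto u₀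
        rw [sub_self] at h1
        exact h1.mono_left nhdsWithin_le_nhds
      · filter_upwards [self_mem_nhdsWithin] with u hu
        refine ⟨sub_ne_zero.mpr (fun h => hu.2 (Set.mem_singleton_iff.mpr h)), ?_⟩
        rw [show u₀ + (u - u₀) = u from by ring]
        exact hsub hu.1
    have hcomp := (hA'f u₀ (hsub hu₀)).comp hmap
    refine hcomp.congr fun u => ?_
    show (u - u₀)⁻¹ • (Af (u₀ + (u - u₀)) - Af u₀) = slope Af u₀ u
    rw [show u₀ + (u - u₀) = u from by ring]
    simp [slope, vsub_eq_sub]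
  -- derivative of u ↦ Γ s u (ι (Af u))
  have hgDeriv : ∀ u₀ ∈ Set.Icc s t, HasDerivWithinAt (fun u => Γ s u (ι (Af u)))
      (Γ s u₀ (A u₀ (Af u₀)) + Γ s u₀ (ι (A'f u₀))) (Set.Icc s t) u₀ := by
    intro u₀ hu₀
    have h1 : HasDerivWithinAt (fun u => Γ s u (ι (Af u₀)))
        (Γ s u₀ (A u₀ (Af u₀))) (Set.Icc s t) u₀ :=
      (htDeriv s u₀ hsJ (hsub hu₀) hu₀.1 (Af u₀)).mono hsubset
    have h2 : HasDerivWithinAt (fun u => Γ s u (ι (Af u - Af u₀)))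
        (Γ s u₀ (ι (A'f u₀))) (Set.Icc s t) u₀ := by
      rw [hasDerivWithinAt_iff_tendsto_slope]
      have hgt : Tendsto (fun u => (u - u₀)⁻¹ • (Af u - Af u₀))
          (𝓝[Set.Icc s t \ {u₀}] u₀) (𝓝 (A'f u₀)) := by
        have := hasDerivWithinAt_iff_tendsto_slope.mp (hAfd u₀ hu₀)
        refine this.congr fun u => ?_
        simp [slope, vsub_eq_sub]
      have partA : Tendsto
          (fun u => Γ s u (ι ((u - u₀)⁻¹ • (Af u - Af u₀) - A'f u₀)))
          (𝓝[Set.Icc s t \ {u₀}] u₀) (𝓝 0) := by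
        have hb : ∀ᶠ u in 𝓝[Set.Icc s t \ {u₀}] u₀,
            ‖Γ s u (ι ((u - u₀)⁻¹ • (Af u - Af u₀) - A'f u₀))‖ ≤
              M * ‖(u - u₀)⁻¹ • (Af u - Af u₀) - A'f u₀‖ := by
          filter_upwards [self_mem_nhdsWithin] with u hu
          exact hM u hu.1 _
        have hn : Tendsto (fun u => ‖(u - u₀)⁻¹ • (Af u - Af u₀) - A'f u₀‖)
            (𝓝[Set.Icc s t \ {u₀}] u₀) (𝓝 0) := by
          exact tendsto_iff_norm_sub_tendsto_zero.mp hgt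
        exact squeeze_zero_norm' hb (by simpa using hn.const_mul M)
      have partB : Tendsto (fun u => Γ s u (ι (A'f u₀)))
          (𝓝[Set.Icc s t \ {u₀}] u₀) (𝓝 (Γ s u₀ (ι (A'f u₀)))) :=
        ((hcontΓ (A'f u₀)) u₀ hu₀).mono_left (nhdsWithin_mono u₀ Set.diff_subset)
      have hsum := partA.add partB
      rw [zero_add] at hsum
      refine hsum.congr fun u => ?_
      have e1 : Γ s u (ι ((u - u₀)⁻¹ • (Af u - Af u₀) - A'f u₀)) + Γ s u (ι (A'f u₀))
          = Γ s u (ι ((u - u₀)⁻¹ • (Af u - Af u₀))) := by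
        rw [← ContinuousLinearMap.map_add, ← map_add, sub_add_cancel]
      rw [e1]
      simp [slope, vsub_eq_sub, sub_self, _root_.map_smul]
    have hadd := h1.add h2
    refine hadd.congr (fun u hu => ?_) ?_
    · conv_lhs => rw [show Af u = Af u₀ + (Af u - Af u₀) from by abel]
      rw [map_add, ContinuousLinearMap.map_add]
      rfl
    · conv_lhs => rw [show Af u₀ = Af u₀ + (Af u₀ - Af u₀) from by abel]
      rw [map_add, ContinuousLinearMap.map_add]
      rfl
  -- K and its derivative
  set K : ℝ → Y := fun u => Γ s u (ι (Af u)) - ι (Af u) with hKdef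
  set K' : ℝ → Y := fun u => Γ s u (A u (Af u)) + ∫ r in s..u, Γ s r (A r (A'f u))
    with hK'def
  have hKd : ∀ u₀ ∈ Set.Icc s t, HasDerivWithinAt K (K' u₀) (Set.Icc s t) u₀ := by
    intro u₀ hu₀
    have hιd : HasDerivWithinAt (fun u => ι (Af u)) (ι (A'f u₀)) (Set.Icc s t) u₀ :=
      (ι.hasFDerivAt).comp_hasDerivWithinAt u₀ (hAfd u₀ hu₀)
    have hs := (hgDeriv u₀ hu₀).sub hιd
    have hre : Γ s u₀ (A u₀ (Af u₀)) + Γ s u₀ (ι (A'f u₀)) - ι (A'f u₀) = K' u₀ := by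
      rw [keyFTC u₀ hu₀ (A'f u₀)]
      show _ = Γ s u₀ (A u₀ (Af u₀)) + ∫ r in s..u₀, Γ s r (A r (A'f u₀))
      abel
    rw [← hre]
    exact hs
  have hKcont : ContinuousOn K (Set.Icc s t) := fun u hu => (hKd u hu).continuousWithinAt
  have hKs : K s = 0 := by
    rw [hKdef]
    simp [hId s hsJ]
  -- integrability facts
  have hK'i : IntervalIntegrable K' volume s t := by
    rw [intervalIntegrable_iff_integrableOn_Icc_of_le hst]
    exact hInt2.add hInt3
  have hcts : ContinuousOn (fun u : ℝ => t - u) (Set.Icc s t) :=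
    (continuous_const.sub continuous_id).continuousOn
  have hsm1 : IntervalIntegrable (fun u => (t - u) • Γ s u (A u (Af u))) volume s t := by
    rw [intervalIntegrable_iff_integrableOn_Icc_of_le hst]
    exact hInt2.continuousOn_smul hcts isCompact_Icc
  have hsm2 : IntervalIntegrable
      (fun u => (t - u) • ∫ r in s..u, Γ s r (A r (A'f u))) volume s t := by
    rw [intervalIntegrable_iff_integrableOn_Icc_of_le hst]
    exact hInt3.continuousOn_smul hcts isCompact_Icc
  have hK'Int : IntegrableOn K' (Set.Icc s t) volume := by
    rw [hK'def]
    exact hInt2.add hInt3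
  have hK'sm : IntervalIntegrable (fun u => (t - u) • K' u) volume s t := by
    rw [intervalIntegrable_iff_integrableOn_Icc_of_le hst]
    exact hK'Int.continuousOn_smul hcts isCompact_Icc
  have hKi : IntervalIntegrable K volume s t := by
    apply ContinuousOn.intervalIntegrable
    rwa [Set.uIcc_of_le hst]
  have hAfi : IntervalIntegrable (fun u => A u f) volume s t := by
    apply ContinuousOn.intervalIntegrable
    rw [Set.uIcc_of_le hst]
    exact (hAcont f).mono hsub
  -- integration by parts: ∫ K = ∫ (t-u) • K'
  have hparts : (∫ u in s..t, K u) = ∫ u in s..t, (t - u) • K' u := by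
    have hH : ∀ u ∈ Set.Ioo s t,
        HasDerivAt (fun u => (t - u) • K u) ((t - u) • K' u - K u) u := by
      intro u hu
      have h1 : HasDerivAt (fun u : ℝ => t - u) (-1) u := by
        simpa using (hasDerivAt_id u).const_sub t
      have h2 : HasDerivAt K (K' u) u :=
        (hKd u ⟨hu.1.le, hu.2.le⟩).hasDerivAt (Icc_mem_nhds hu.1 hu.2)
      have := h1.smul h2
      have he : (t - u) • K' u + (-1 : ℝ) • K u = (t - u) • K' u - K u := by
        rw [neg_one_smul]; abel
      rwa [he] at this
    have hHc : ContinuousOn (fun u => (t - u) • K u) (Set.Icc s t) := hcts.smul hKcont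
    have hHi : IntervalIntegrable (fun u => (t - u) • K' u - K u) volume s t :=
      hK'sm.sub hKi
    have hFTC := intervalIntegral.integral_eq_sub_of_hasDerivAt_of_le hst hHc hH hHi
    rw [sub_self, zero_smul, hKs, smul_zero, sub_zero] at hFTC
    rw [intervalIntegral.integral_sub hK'sm hKi] at hFTC
    exact (sub_eq_zero.mp hFTC).symm
  -- assembly
  have step1 : Γ s t (ι f) = ι f + ∫ u in s..t, Γ s u (A u f) :=
    keyFTC t ⟨hst, le_rfl⟩ f
  have step2 : (∫ u in s..t, Γ s u (A u f)) = (∫ u in s..t, A u f) + ∫ u in s..t, K u := by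
    rw [← intervalIntegral.integral_add hAfi hKi]
    apply intervalIntegral.integral_congr
    intro u hu
    rw [Set.uIcc_of_le hst] at hu
    show Γ s u (A u f) = A u f + K u
    rw [← hAf u (hsub hu)]
    show Γ s u (ι (Af u)) = ι (Af u) + (Γ s u (ι (Af u)) - ι (Af u))
    abel
  have step3 : (∫ u in s..t, (t - u) • K' u) =
      (∫ u in s..t, (t - u) • Γ s u (A u (Af u))) +
        ∫ u in s..t, (t - u) • ∫ r in s..u, Γ s r (A r (A'f u)) := by
    rw [← intervalIntegral.integral_add hsm1 hsm2]
    apply intervalIntegral.integral_congr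
    intro u hu
    show (t - u) • (Γ s u (A u (Af u)) + ∫ r in s..u, Γ s r (A r (A'f u))) = _
    rw [smul_add]
  rw [step1, step2, hparts, step3]
  abel
end

section
/- In the setting of the pathwise random-evolution construction: let s ≥ 0, (T_n)_{n∈ℕ} strictly increasing with T_0 = s and T_n → ∞, Γ_n backward inhomogeneous Y-semigroups on [s,∞) each regular with generator A_n (so that Y₁ ⊆ D(A_n), Γ_n preserves Y₁, ∂/∂t Γ_n(s',t)f = Γ_n(s',t)A_n(t)f for f ∈ Y₁, and u ↦ Γ_n(s',u)A_n(u)f is Bochner integrable on compacts), and D_n ∈ B(Y) for n ≥ 1. With N(t) = max{n : T_n ≤ t} and V(t) = [∏_{k=1}^{N(t)} Γ_{k−1}(T_{k−1}, T_k) D_k] ∘ Γ_{N(t)}(T_{N(t)}, t), one has for every f ∈ Y₁ and every t ≥ s: V(t)f = f + ∫_s^t V(u) A_{N(u)}(u) f du + ∑_{k=1}^{N(t)} V(T_k⁻)(D_k − I)f, where V(T_k⁻)f denotes the left limit lim_{u↑T_k} V(u)f and the integral is a Bochner integral in Y. -/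
open Filter Topology Set MeasureTheory

/-- Pathwise integral representation of an inhomogeneous random evolution.
In the setting of the pathwise construction (`T`, `Γ n`, `D n`, `N`, `P`, `V` as in the RCLL
proposition), with each `Γ n` regular with generator `A n` (so `Y₁ ⊆ D(A n)` via `hGen`,
`Γ n` preserves `Y₁` via `Γ₁`, `∂/∂t Γ_n(s',t)f = Γ_n(s',t) A_n(t) f` for `f ∈ Y₁`, and
`u ↦ Γ_n(s',u)A_n(u)f` is Bochner integrable on compacts), and `L k g` denoting the left limit
`V(T_k⁻)g`, one has for every `f ∈ Y₁` and `t ≥ s`: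
`V(t)f = f + ∫_s^t V(u) A_{N(u)}(u) f du + ∑_{k=1}^{N(t)} V(T_k⁻)(D_k − I)f`. -/
theorem stmt_9
    {Y : Type*} [NormedAddCommGroup Y] [NormedSpace ℝ Y] [CompleteSpace Y]
    [TopologicalSpace.SeparableSpace Y]
    {Y₁ : Type*} [NormedAddCommGroup Y₁] [NormedSpace ℝ Y₁] [CompleteSpace Y₁]
    [TopologicalSpace.SeparableSpace Y₁]
    (ι : Y₁ →L[ℝ] Y) (hι : Function.Injective ι)
    (s : ℝ) (hs : 0 ≤ s)
    (T : ℕ → ℝ) (hT0 : T 0 = s) (hTmono : StrictMono T)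
    (hTtop : Tendsto T atTop atTop)
    (Γ : ℕ → ℝ → ℝ → Y →L[ℝ] Y)
    (hId : ∀ n : ℕ, ∀ t : ℝ, s ≤ t → Γ n t t = ContinuousLinearMap.id ℝ Y)
    (hSemi : ∀ (n : ℕ) (r u t : ℝ), s ≤ r → r ≤ u → u ≤ t →
      ∀ f : Y, Γ n r u (Γ n u t f) = Γ n r t f)
    (hCont : ∀ (n : ℕ) (s' : ℝ), s ≤ s' → ∀ f : Y,
      ContinuousOn (fun u => Γ n s' u f) (Set.Ici s'))
    (A : ℕ → ℝ → Y₁ → Y)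
    (hGen : ∀ (n : ℕ) (t : ℝ), s ≤ t → ∀ f : Y₁,
      Tendsto (fun h : ℝ => h⁻¹ • (Γ n t (t + h) (ι f) - ι f))
        (𝓝[{h : ℝ | 0 < h}] 0) (𝓝 (A n t f)) ∧
      Tendsto (fun h : ℝ => h⁻¹ • (Γ n (t - h) t (ι f) - ι f))
        (𝓝[{h : ℝ | 0 < h ∧ s ≤ t - h}] 0) (𝓝 (A n t f)))
    (Γ₁ : ℕ → ℝ → ℝ → Y₁ → Y₁)
    (hΓ₁ : ∀ (n : ℕ) (r t : ℝ), s ≤ r → r ≤ t → ∀ f : Y₁,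
      ι (Γ₁ n r t f) = Γ n r t (ι f))
    (htDeriv : ∀ (n : ℕ) (s' t : ℝ), s ≤ s' → s' ≤ t → ∀ f : Y₁,
      HasDerivWithinAt (fun u => Γ n s' u (ι f)) (Γ n s' t (A n t f)) (Set.Ici s') t)
    (hIntReg : ∀ (n : ℕ) (s' t : ℝ), s ≤ s' → s' ≤ t → ∀ f : Y₁,
      IntegrableOn (fun u => Γ n s' u (A n u f)) (Set.Icc s' t))
    (D : ℕ → Y →L[ℝ] Y)
    (N : ℝ → ℕ) (hN : ∀ t : ℝ, s ≤ t → T (N t) ≤ t ∧ t < T (N t + 1))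
    (P : ℕ → Y →L[ℝ] Y)
    (hP0 : P 0 = ContinuousLinearMap.id ℝ Y)
    (hPsucc : ∀ n : ℕ, P (n + 1) = (P n).comp ((Γ n (T n) (T (n + 1))).comp (D (n + 1))))
    (V : ℝ → Y →L[ℝ] Y)
    (hV : ∀ t : ℝ, s ≤ t → V t = (P (N t)).comp (Γ (N t) (T (N t)) t))
    (L : ℕ → Y → Y)
    (hL : ∀ k : ℕ, 1 ≤ k → ∀ g : Y, Tendsto (fun u => V u g) (𝓝[<] (T k)) (𝓝 (L k g))) :
    ∀ f : Y₁, ∀ t : ℝ, s ≤ t →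
      IntegrableOn (fun u => V u (A (N u) u f)) (Set.Icc s t) ∧
      V t (ι f) = ι f + (∫ u in s..t, V u (A (N u) u f)) +
        ∑ k ∈ Finset.Icc 1 (N t), L k (D k (ι f) - ι f) := by

  intro f t ht
  have hTs : ∀ n : ℕ, s ≤ T n := by
    intro n
    calc s = T 0 := hT0.symm
    _ ≤ T n := hTmono.monotone (Nat.zero_le n)
  have hTlt : ∀ n : ℕ, T n < T (n + 1) := fun n => hTmono (Nat.lt_succ_self n)
  have hNuniq : ∀ (u : ℝ) (n : ℕ), T n ≤ u → u < T (n + 1) → N u = n := by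
    intro u n h1 h2
    have hsu : s ≤ u := le_trans (hTs n) h1
    obtain ⟨ha, hb⟩ := hN u hsu
    rcases lt_trichotomy (N u) n with h | h | h
    · exfalso
      have : T (N u + 1) ≤ T n := hTmono.monotone (by omega)
      linarith
    · exact h
    · exfalso
      have : T (n + 1) ≤ T (N u) := hTmono.monotone (by omega)
      linarith
  have hNT : ∀ n : ℕ, N (T n) = n := fun n => hNuniq _ n le_rfl (hTlt n)
  have hVT : ∀ (n : ℕ) (g : Y), V (T n) g = P n g := by
    intro n g
    rw [hV (T n) (hTs n), hNT, hId n (T n) (hTs n)]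
    rfl
  -- value of V on the interior of the intervals
  have hW : ∀ (n : ℕ) (u : ℝ), T n ≤ u → u < T (n + 1) →
      V u (A (N u) u f) = P n (Γ n (T n) u (A n u f)) := by
    intro n u h1 h2
    have hsu : s ≤ u := le_trans (hTs n) h1
    rw [hV u hsu, hNuniq u n h1 h2]
    rfl
  -- fundamental theorem of calculus for each Γ n
  have hFTC : ∀ (n : ℕ) (b : ℝ), T n ≤ b →
      (∫ u in (T n)..b, Γ n (T n) u (A n u f)) = Γ n (T n) b (ι f) - ι f := by
    intro n b hnb
    have hsn := hTs n
    have hcont : ContinuousOn (fun u => Γ n (T n) u (ι f)) (Icc (T n) b) :=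
      (hCont n (T n) hsn (ι f)).mono Icc_subset_Ici_self
    have hderiv : ∀ x ∈ Ioo (T n) b,
        HasDerivWithinAt (fun u => Γ n (T n) u (ι f)) (Γ n (T n) x (A n x f)) (Ioi x) x :=
      fun x hx => (htDeriv n (T n) x hsn hx.1.le f).mono
        (fun y hy => le_trans hx.1.le (le_of_lt hy))
    have hint : IntervalIntegrable (fun u => Γ n (T n) u (A n u f)) volume (T n) b := by
      apply IntegrableOn.intervalIntegrable
      rw [Set.uIcc_of_le hnb]
      exact hIntReg n (T n) b hsn hnb f
    have h := intervalIntegral.integral_eq_sub_of_hasDeriv_right_of_le hnb hcont hderiv hint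
    rw [h, hId n (T n) hsn]
    rfl
  -- integrability and the value of the integral on each piece
  have hPiece : ∀ (n : ℕ) (b : ℝ), T n ≤ b → b ≤ T (n + 1) →
      IntegrableOn (fun u => V u (A (N u) u f)) (Icc (T n) b) ∧
      (∫ u in (T n)..b, V u (A (N u) u f)) = P n (Γ n (T n) b (ι f)) - P n (ι f) := by
    intro n b h1 h2
    have hsn := hTs n
    have h0 : (volume : Measure ℝ) {T (n + 1)} = 0 := measure_singleton _
    have hW' : IntegrableOn (fun u => P n (Γ n (T n) u (A n u f))) (Icc (T n) b) :=
      (P n).integrable_comp (hIntReg n (T n) b hsn h1 f)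
    have hae : (fun u => P n (Γ n (T n) u (A n u f))) =ᵐ[volume.restrict (Icc (T n) b)]
        (fun u => V u (A (N u) u f)) := by
      rw [Filter.EventuallyEq, ae_restrict_iff' measurableSet_Icc]
      filter_upwards [compl_mem_ae_iff.mpr h0] with u hu hmem
      have hne : u ≠ T (n + 1) := by simpa using hu
      have hlt : u < T (n + 1) := lt_of_le_of_ne (le_trans hmem.2 h2) hne
      exact (hW n u hmem.1 hlt).symm
    have hintΓ : IntervalIntegrable (fun u => Γ n (T n) u (A n u f)) volume (T n) b := by
      apply IntegrableOn.intervalIntegrable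
      rw [Set.uIcc_of_le h1]
      exact hIntReg n (T n) b hsn h1 f
    refine ⟨hW'.congr hae, ?_⟩
    calc (∫ u in (T n)..b, V u (A (N u) u f))
        = ∫ u in (T n)..b, P n (Γ n (T n) u (A n u f)) := by
          apply intervalIntegral.integral_congr_ae
          filter_upwards [compl_mem_ae_iff.mpr h0] with u hu hmem
          rw [Set.uIoc_of_le h1] at hmem
          have hne : u ≠ T (n + 1) := by simpa using hu
          exact hW n u hmem.1.le (lt_of_le_of_ne (le_trans hmem.2 h2) hne)
      _ = P n (∫ u in (T n)..b, Γ n (T n) u (A n u f)) :=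
          (P n).intervalIntegral_comp_comm hintΓ
      _ = P n (Γ n (T n) b (ι f)) - P n (ι f) := by
          rw [hFTC n b h1, map_sub]
  -- identification of the left limits
  have hLval : ∀ (m : ℕ) (g : Y), L (m + 1) g = P m (Γ m (T m) (T (m + 1)) g) := by
    intro m g
    have hsm := hTs m
    have hb := hTlt m
    have h1 : Tendsto (fun u => Γ m (T m) u g) (𝓝[<] T (m + 1))
        (𝓝 (Γ m (T m) (T (m + 1)) g)) := by
      have hc := (hCont m (T m) hsm g) (T (m + 1)) (le_of_lt hb)
      have h2 : 𝓝[<] (T (m + 1)) ≤ 𝓝[Set.Ici (T m)] (T (m + 1)) := by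
        rw [← nhdsWithin_Ioo_eq_nhdsLT hb]
        exact nhdsWithin_mono _ (fun x hx => le_of_lt hx.1)
      exact hc.tendsto.mono_left h2
    have h3 : Tendsto (fun u => V u g) (𝓝[<] T (m + 1))
        (𝓝 (P m (Γ m (T m) (T (m + 1)) g))) := by
      refine Tendsto.congr' ?_ (((P m).continuous.tendsto _).comp h1)
      filter_upwards [Ioo_mem_nhdsLT_of_mem (⟨hb, le_rfl⟩ : T (m + 1) ∈ Set.Ioc (T m) (T (m + 1)))]
        with u hu
      have hsu : s ≤ u := le_trans hsm hu.1.le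
      show P m (Γ m (T m) u g) = V u g
      rw [hV u hsu, hNuniq u m hu.1.le hu.2]
      rfl
    exact tendsto_nhds_unique (hL (m + 1) (Nat.le_add_left 1 m) g) h3
  have hVL : ∀ (m : ℕ) (g : Y), V (T (m + 1)) g = L (m + 1) (D (m + 1) g) := by
    intro m g
    rw [hVT (m + 1) g, hLval m, hPsucc m]
    rfl
  -- the statement at the jump times, by induction
  have hQ : ∀ n : ℕ, IntegrableOn (fun u => V u (A (N u) u f)) (Icc s (T n)) ∧
      V (T n) (ι f) = ι f + (∫ u in s..(T n), V u (A (N u) u f)) +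
        ∑ k ∈ Finset.Icc 1 n, L k (D k (ι f) - ι f) := by
    intro n
    induction n with
    | zero =>
      constructor
      · have h := (hPiece 0 s (le_of_eq hT0) (by rw [← hT0]; exact (hTlt 0).le)).1
        rw [hT0] at h
        rw [hT0]
        exact h
      · rw [hVT 0 (ι f), hP0, hT0]
        simp
    | succ n ih =>
      obtain ⟨ihInt, ihEq⟩ := ih
      have h1 : T n ≤ T (n + 1) := (hTlt n).le
      obtain ⟨pInt, pEq⟩ := hPiece n (T (n + 1)) h1 le_rfl
      have hii1 : IntervalIntegrable (fun u => V u (A (N u) u f)) volume s (T n) := by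
        apply IntegrableOn.intervalIntegrable
        rw [Set.uIcc_of_le (hTs n)]
        exact ihInt
      have hii2 : IntervalIntegrable (fun u => V u (A (N u) u f)) volume (T n) (T (n + 1)) := by
        apply IntegrableOn.intervalIntegrable
        rw [Set.uIcc_of_le h1]
        exact pInt
      have hadd := intervalIntegral.integral_add_adjacent_intervals hii1 hii2
      constructor
      · rw [← Set.Icc_union_Icc_eq_Icc (hTs n) h1]
        exact ihInt.union pInt
      · have hsum : (∑ k ∈ Finset.Icc 1 (n + 1), L k (D k (ι f) - ι f)) =
            (∑ k ∈ Finset.Icc 1 n, L k (D k (ι f) - ι f)) + L (n + 1) (D (n + 1) (ι f) - ι f) :=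
          Finset.sum_Icc_succ_top (Nat.le_add_left 1 n) _
        have hLsub : L (n + 1) (D (n + 1) (ι f) - ι f)
            = P n (Γ n (T n) (T (n + 1)) (D (n + 1) (ι f))) - P n (Γ n (T n) (T (n + 1)) (ι f)) := by
          rw [hLval, map_sub, map_sub]
        rw [hVL n (ι f), hsum, hLsub, ← hadd, pEq, hLval n (D (n + 1) (ι f)),
          ← hVT n (ι f), ihEq]
        abel
  -- the general case
  obtain ⟨h1, h2⟩ := hN t ht
  obtain ⟨qInt, qEq⟩ := hQ (N t)
  obtain ⟨pInt, pEq⟩ := hPiece (N t) t h1 h2.le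
  have hii1 : IntervalIntegrable (fun u => V u (A (N u) u f)) volume s (T (N t)) := by
    apply IntegrableOn.intervalIntegrable
    rw [Set.uIcc_of_le (hTs (N t))]
    exact qInt
  have hii2 : IntervalIntegrable (fun u => V u (A (N u) u f)) volume (T (N t)) t := by
    apply IntegrableOn.intervalIntegrable
    rw [Set.uIcc_of_le h1]
    exact pInt
  have hadd := intervalIntegral.integral_add_adjacent_intervals hii1 hii2
  constructor
  · rw [← Set.Icc_union_Icc_eq_Icc (hTs (N t)) h1]
    exact qInt.union pInt
  · have hVt : V t (ι f) = P (N t) (Γ (N t) (T (N t)) t (ι f)) := by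
      rw [hV t ht]
      rfl
    rw [hVt, ← hadd, pEq, ← hVT (N t) (ι f), qEq]
    abel
end

section
/- Let M > 0 and let g : [0,∞) → [0,∞) be a nondecreasing function with g(u)/u → 1/M as u → ∞. Then for every 0 ≤ s, every η > 0 and every T ≥ s + η: sup_{t∈[s+η,T]} | ε · ( g((t + η − s)/ε) − g((t − s)/ε) ) − η/M | → 0 as ε ↓ 0. -/
open Filter Topology Set

/-- If `g : [0,∞) → [0,∞)` is nondecreasing with `g(u)/u → 1/M` as
`u → ∞` (`M > 0`), then for `η > 0` the sliding-window increments satisfy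
`sup_{t∈[s+η,T]} |ε (g((t+η−s)/ε) − g((t−s)/ε)) − η/M| → 0` as `ε ↓ 0` (stated in ε-form). -/
theorem stmt_19 (M : ℝ) (hM : 0 < M)
    (g : ℝ → ℝ)
    (hg0 : ∀ u : ℝ, 0 ≤ u → 0 ≤ g u)
    (hmono : ∀ u v : ℝ, 0 ≤ u → u ≤ v → g u ≤ g v)
    (hlim : Tendsto (fun u => g u / u) atTop (𝓝 (1 / M))) :
    ∀ s η T : ℝ, 0 ≤ s → 0 < η → s + η ≤ T →
      ∀ δ : ℝ, 0 < δ → ∀ᶠ ε in 𝓝[>] (0 : ℝ),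
        ∀ t ∈ Set.Icc (s + η) T,
          |ε * (g ((t + η - s) / ε) - g ((t - s) / ε)) - η / M| < δ := by
  intro s η T hs hη hT δ hδ
  set C : ℝ := T - s + η with hC
  have hCpos : 0 < C := by simp only [hC]; linarith
  have hev : ∀ᶠ u in atTop, |g u / u - 1 / M| < δ / (2 * C) := by
    have := Metric.tendsto_nhds.mp hlim (δ / (2 * C)) (by positivity)
    simpa [Real.dist_eq] using this
  obtain ⟨U, hU⟩ := eventually_atTop.mp hev
  have hUm : (0:ℝ) < max U 1 := lt_of_lt_of_le one_pos (le_max_right _ _)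
  have hε0 : (0:ℝ) < η / max U 1 := by positivity
  have hmem : Set.Ioo (0:ℝ) (η / max U 1) ∈ 𝓝[>] (0:ℝ) :=
    Ioo_mem_nhdsGT_of_mem ⟨le_refl _, hε0⟩
  filter_upwards [hmem] with ε hε t ht
  have hεpos : 0 < ε := hε.1
  have hεlt : ε < η / max U 1 := hε.2
  -- key: for η ≤ x ≤ C, |ε * g (x/ε) - x/M| < δ/2
  have key : ∀ x : ℝ, η ≤ x → x ≤ C → |ε * g (x / ε) - x / M| < δ / 2 := by
    intro x hx1 hx2
    have hxpos : 0 < x := lt_of_lt_of_le hη hx1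
    have hyU : U ≤ x / ε := by
      have h1 : max U 1 < η / ε := by
        rw [lt_div_iff₀ hεpos]
        have h := (lt_div_iff₀ hUm).mp hεlt
        nlinarith [mul_comm ε (max U 1)]
      have h2 : η / ε ≤ x / ε := by gcongr
      exact le_of_lt (lt_of_le_of_lt (le_max_left U 1) (lt_of_lt_of_le h1 h2))
    have herr := hU (x / ε) hyU
    have hrw : ε * g (x / ε) - x / M = x * (g (x / ε) / (x / ε) - 1 / M) := by
      field_simp
    rw [hrw, abs_mul, abs_of_pos hxpos]
    calc x * |g (x / ε) / (x / ε) - 1 / M| ≤ C * |g (x / ε) / (x / ε) - 1 / M| := by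
          gcongr
      _ < C * (δ / (2 * C)) := by
          have hnonneg : 0 ≤ |g (x / ε) / (x / ε) - 1 / M| := abs_nonneg _
          exact (mul_lt_mul_iff_right₀ hCpos).mpr herr
      _ = δ / 2 := by field_simp
  have ha1 : η ≤ t - s := by linarith [ht.1]
  have ha2 : t - s ≤ C := by simp only [hC]; linarith [ht.2]
  have hb1 : η ≤ t + η - s := by linarith [ht.1, hs, hη]
  have hb2 : t + η - s ≤ C := by simp only [hC]; linarith [ht.2]
  have h1 := key (t + η - s) hb1 hb2
  have h2 := key (t - s) ha1 ha2
  have hdecomp : ε * (g ((t + η - s) / ε) - g ((t - s) / ε)) - η / M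
      = (ε * g ((t + η - s) / ε) - (t + η - s) / M) - (ε * g ((t - s) / ε) - (t - s) / M) := by
    ring
  rw [hdecomp]
  calc |(ε * g ((t + η - s) / ε) - (t + η - s) / M) - (ε * g ((t - s) / ε) - (t - s) / M)|
      ≤ |ε * g ((t + η - s) / ε) - (t + η - s) / M| + |ε * g ((t - s) / ε) - (t - s) / M| :=
        abs_sub _ _
    _ < δ / 2 + δ / 2 := add_lt_add h1 h2
    _ = δ := by ring
end
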